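/- arXiv:math/0605306 — 6 statements merged into one kernel-verified Lean document; each statement's English description precedes it below -/
import Mathlib

section
/- Let ρ and σ be two well agreeing near weights on R, let f, g ∈ R \ {0}, and set a := (ρ(f), σ(f)) and b := (ρ(g), σ(g)). Then there exist λ, μ ∈ {0, 1}, not both zero, such that λf + μg ≠ 0 and lub(a, b) = (ρ(λf + μg), σ(λf + μg)). In particular, if f, g lie in a subset S ⊆ R closed under addition, then lub(a, b) ∈ H(S). -/
structure NearWeight (F R : Type*) [Field F] [CommRing R] [Algebra F R] where
  w : R → WithBot ℕ
  N0 : ∀ f : R, w f = ⊥ ↔ f = 0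
  N1 : ∀ (c : F) (f : R), c ≠ 0 → w (c • f) = w f
  N2 : ∀ f g : R, w (f + g) ≤ max (w f) (w g)
  N3 : ∀ f g h : R, w f < w g → w (f * h) ≤ w (g * h)
  N3' : ∀ f g h : R, w f < w g → w 1 < w h → w (f * h) < w (g * h)
  N4 : ∀ f g : R, w 1 < w f → w 1 < w g → w f = w g →
      ∃ c : F, c ≠ 0 ∧ w (f - c • g) < w f
  N5 : ∀ f g : R, w (f * g) ≤ w f + w g
  N5' : ∀ f g : R, w 1 < w f → w 1 < w g → w (f * g) = w f + w g
  norm0 : ∀ f : R, f ≠ 0 → w f ≤ w 1 → w f = 0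
  normgcd : ∀ d : ℕ, (∀ f : R, w 1 < w f → ∃ k : ℕ, w f = ((d * k : ℕ) : WithBot ℕ)) → d = 1

namespace NearWeight

variable {F R : Type*} [Field F] [CommRing R] [Algebra F R]

def U (ρ : NearWeight F R) : Set R := {r | ρ.w r ≤ ρ.w 1}

def M (ρ : NearWeight F R) : Set R := {r | ρ.w 1 < ρ.w r}

def nval (ρ : NearWeight F R) (f : R) : ℕ := (ρ.w f).unbotD 0

def Hset (ρ σ : NearWeight F R) (S : Set R) : Set (ℕ × ℕ) :=
  {p | ∃ f ∈ S, f ≠ 0 ∧ (ρ.nval f, σ.nval f) = p}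

def WellAgreeing (ρ σ : NearWeight F R) : Prop :=
  (Hset ρ σ Set.univ)ᶜ.Finite ∧ ρ.U ∩ σ.U = Set.range (algebraMap F R)

noncomputable def xH (ρ σ : NearWeight F R) (n : ℕ) : ℕ :=
  sInf {m | (m, n) ∈ Hset ρ σ Set.univ}

noncomputable def yH (ρ σ : NearWeight F R) (n : ℕ) : ℕ :=
  sInf {m | (n, m) ∈ Hset ρ σ Set.univ}

def lub (a b : ℕ × ℕ) : ℕ × ℕ := (max a.1 b.1, max a.2 b.2)

noncomputable def Gamma (ρ σ : NearWeight F R) : Set (ℕ × ℕ) :=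
  {p | ∃ m : ℕ, p = (m, yH ρ σ m)} ∪ {p | ∃ n : ℕ, p = (xH ρ σ n, n)}

def Hbarx (ρ σ : NearWeight F R) : Set ℕ := {m | (m, 0) ∈ Hset ρ σ Set.univ}

def Hbary (ρ σ : NearWeight F R) : Set ℕ := {n | (0, n) ∈ Hset ρ σ Set.univ}

noncomputable def GammaTilde (ρ σ : NearWeight F R) : Set (ℕ × ℕ) :=
  {p | ∃ m : ℕ, m ∉ Hbarx ρ σ ∧ p = (m, yH ρ σ m)}

def Delta (p : ℕ × ℕ) : Set (ℕ × ℕ) :=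
  {q | (q.1 = p.1 ∧ q.2 < p.2) ∨ (q.2 = p.2 ∧ q.1 < p.1)}

noncomputable def tw (ρ : NearWeight F R) (f : R) : ℤ :=
  sInf {z : ℤ | ∃ g ∈ ρ.M, z = (ρ.nval (f * g) : ℤ) - (ρ.nval g : ℤ)}

end NearWeight

variable {F R : Type*} [Field F] [CommRing R] [Algebra F R]

namespace NearWeight

lemma coe_nat_sup (a b : ℕ) : ((a ⊔ b : ℕ) : WithBot ℕ) = (a : WithBot ℕ) ⊔ (b : WithBot ℕ) := by
  rw [Nat.cast_withBot, Nat.cast_withBot, Nat.cast_withBot]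
  exact WithBot.coe_sup a b

lemma wneg (ρ : NearWeight F R) (g : R) : ρ.w (-g) = ρ.w g := by
  have := ρ.N1 (-1 : F) g (by norm_num)
  simpa [neg_smul, one_smul] using this

lemma wn (ρ : NearWeight F R) {f : R} (hf : f ≠ 0) :
    ρ.w f = (ρ.nval f : WithBot ℕ) := by
  have h : ρ.w f ≠ ⊥ := fun hb => hf ((ρ.N0 f).mp hb)
  rcases WithBot.ne_bot_iff_exists.mp h with ⟨n, hn⟩
  have h2 : ρ.nval f = n := by
    rw [NearWeight.nval, ← hn, WithBot.unbotD_coe]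
  rw [h2, ← hn]
  norm_cast

lemma keylem (ρ : NearWeight F R) (f g : R) :
    ρ.w (f + g) = max (ρ.w f) (ρ.w g) ∨ ρ.w f = ρ.w g := by
  by_cases h : ρ.w (f + g) = max (ρ.w f) (ρ.w g)
  · exact Or.inl h
  right
  have hlt : ρ.w (f + g) < max (ρ.w f) (ρ.w g) := lt_of_le_of_ne (ρ.N2 f g) h
  have hf' : ρ.w f ≤ max (ρ.w (f + g)) (ρ.w g) := by
    have h2 := ρ.N2 (f + g) (-g)
    have h3 : (f + g) + -g = f := by ring
    rw [h3, wneg] at h2; exact h2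
  have hg' : ρ.w g ≤ max (ρ.w (f + g)) (ρ.w f) := by
    have h2 := ρ.N2 (f + g) (-f)
    have h3 : (f + g) + -f = g := by ring
    rw [h3, wneg] at h2; exact h2
  rcases le_total (ρ.w f) (ρ.w g) with h1 | h1
  · refine le_antisymm h1 ?_
    rw [max_eq_right h1] at hlt
    rcases max_choice (ρ.w (f + g)) (ρ.w f) with hm | hm <;> rw [hm] at hg'
    · exact absurd (lt_of_le_of_lt hg' hlt) (lt_irrefl _)
    · exact hg'
  · refine le_antisymm ?_ h1
    rw [max_eq_left h1] at hlt
    rcases max_choice (ρ.w (f + g)) (ρ.w g) with hm | hm <;> rw [hm] at hf'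
    · exact absurd (lt_of_le_of_lt hf' hlt) (lt_irrefl _)
    · exact hf'

end NearWeight

theorem stmt1
    (hinj : Function.Injective (algebraMap F R))
    (hsur : ¬ Function.Surjective (algebraMap F R))
    (ρ σ : NearWeight F R) (hwa : NearWeight.WellAgreeing ρ σ)
    (f g : R) (hf : f ≠ 0) (hg : g ≠ 0) :
    (∃ l m : F, (l = 0 ∨ l = 1) ∧ (m = 0 ∨ m = 1) ∧ ¬(l = 0 ∧ m = 0) ∧
      l • f + m • g ≠ 0 ∧
      NearWeight.lub (ρ.nval f, σ.nval f) (ρ.nval g, σ.nval g) =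
        (ρ.nval (l • f + m • g), σ.nval (l • f + m • g))) ∧
    (∀ S : Set R, (∀ a ∈ S, ∀ b ∈ S, a + b ∈ S) → f ∈ S → g ∈ S →
      NearWeight.lub (ρ.nval f, σ.nval f) (ρ.nval g, σ.nval g) ∈ NearWeight.Hset ρ σ S) := by
  classical
  have hmain : ∃ l m : F, (l = 0 ∨ l = 1) ∧ (m = 0 ∨ m = 1) ∧ ¬(l = 0 ∧ m = 0) ∧
      l • f + m • g ≠ 0 ∧
      NearWeight.lub (ρ.nval f, σ.nval f) (ρ.nval g, σ.nval g) =
        (ρ.nval (l • f + m • g), σ.nval (l • f + m • g)) := by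
    by_cases hfg : f + g = 0
    · have hgf : g = -f := by
        have : g = -f + (f + g) := by ring
        rw [hfg, add_zero] at this; exact this
      have hρeq : ρ.nval g = ρ.nval f := by
        have hw : ρ.w g = ρ.w f := by rw [hgf, ρ.wneg]
        rw [ρ.wn hg, ρ.wn hf] at hw; exact_mod_cast hw
      have hσeq : σ.nval g = σ.nval f := by
        have hw : σ.w g = σ.w f := by rw [hgf, σ.wneg]
        rw [σ.wn hg, σ.wn hf] at hw; exact_mod_cast hw
      refine ⟨1, 0, Or.inr rfl, Or.inl rfl, by simp, by simpa using hf, ?_⟩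
      simp [NearWeight.lub, hρeq, hσeq]
    · by_cases hρeq : ρ.nval f = ρ.nval g
      · by_cases hle : σ.nval g ≤ σ.nval f
        · refine ⟨1, 0, Or.inr rfl, Or.inl rfl, by simp, by simpa using hf, ?_⟩
          simp [NearWeight.lub, ← hρeq, max_eq_left hle]
        · push_neg at hle
          refine ⟨0, 1, Or.inl rfl, Or.inr rfl, by simp, by simpa using hg, ?_⟩
          simp [NearWeight.lub, hρeq, max_eq_right hle.le]
      · have hρmax : ρ.w (f + g) = max (ρ.w f) (ρ.w g) := by
          rcases NearWeight.keylem ρ f g with h | h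
          · exact h
          · exfalso; apply hρeq
            rw [ρ.wn hf, ρ.wn hg] at h; exact_mod_cast h
        by_cases hσeq : σ.nval f = σ.nval g
        · by_cases hle : ρ.nval g ≤ ρ.nval f
          · refine ⟨1, 0, Or.inr rfl, Or.inl rfl, by simp, by simpa using hf, ?_⟩
            simp [NearWeight.lub, ← hσeq, max_eq_left hle]
          · push_neg at hle
            refine ⟨0, 1, Or.inl rfl, Or.inr rfl, by simp, by simpa using hg, ?_⟩
            simp [NearWeight.lub, hσeq, max_eq_right hle.le]
        · have hσmax : σ.w (f + g) = max (σ.w f) (σ.w g) := by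
            rcases NearWeight.keylem σ f g with h | h
            · exact h
            · exfalso; apply hσeq
              rw [σ.wn hf, σ.wn hg] at h; exact_mod_cast h
          have h1 : ρ.nval (f + g) = max (ρ.nval f) (ρ.nval g) := by
            have hw := hρmax
            rw [ρ.wn hfg, ρ.wn hf, ρ.wn hg, ← NearWeight.coe_nat_sup] at hw
            exact_mod_cast hw
          have h2 : σ.nval (f + g) = max (σ.nval f) (σ.nval g) := by
            have hw := hσmax
            rw [σ.wn hfg, σ.wn hf, σ.wn hg, ← NearWeight.coe_nat_sup] at hw
            exact_mod_cast hw
          refine ⟨1, 1, Or.inr rfl, Or.inr rfl, by simp, by simpa using hfg, ?_⟩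
          simp [NearWeight.lub, h1, h2]
  refine ⟨hmain, fun S hS hfS hgS => ?_⟩
  obtain ⟨l, m, hl, hm, hnz, hne, heq⟩ := hmain
  refine ⟨l • f + m • g, ?_, hne, heq.symm⟩
  rcases hl with rfl | rfl <;> rcases hm with rfl | rfl
  · exact absurd ⟨rfl, rfl⟩ hnz
  · simpa using hgS
  · simpa using hfS
  · simpa using hS f hfS g hgS
end

section
/- Let ρ and σ be two well agreeing near weights on R and let S ⊆ R be a subset closed under addition and multiplication. Then H(S) is closed under addition: if a, b ∈ H(S), then a + b ∈ H(S). In particular, for every F-subalgebra R' of R, the set H(R') is a subsemigroup of ℕ². -/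
namespace NearWeight

variable {F R : Type*} [Field F] [CommRing R] [Algebra F R]

lemma w_ne_bot (ρ : NearWeight F R) {f : R} (hf : f ≠ 0) : ρ.w f ≠ ⊥ := by
  rw [Ne, ρ.N0]; exact hf

lemma ne_zero_of_w (ρ : NearWeight F R) {h : R} (hw : ρ.w h ≠ ⊥) : h ≠ 0 :=
  fun h0 => hw ((ρ.N0 h).mpr h0)

lemma w_one (hinj : Function.Injective (algebraMap F R)) (ρ : NearWeight F R) :
    ρ.w 1 = 0 := by
  have h1 : (1:R) ≠ 0 := by
    intro h
    have : (algebraMap F R) 1 = algebraMap F R 0 := by simp [h]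
    exact one_ne_zero (hinj this)
  exact ρ.norm0 1 h1 le_rfl

lemma w_neg (ρ : NearWeight F R) (f : R) : ρ.w (-f) = ρ.w f := by
  have := ρ.N1 (-1) f (by norm_num)
  rwa [neg_one_smul] at this

lemma w_add_eq_right (ρ : NearWeight F R) {a b : R} (h : ρ.w a < ρ.w b) :
    ρ.w (a + b) = ρ.w b := by
  have le1 : ρ.w (a+b) ≤ ρ.w b := (ρ.N2 a b).trans (by simp [h.le])
  rcases lt_or_ge (ρ.w (a+b)) (ρ.w b) with hlt | hge
  · exfalso
    have hb : (a+b) + -a = b := by ring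
    have h2 := ρ.N2 (a+b) (-a)
    rw [hb, w_neg] at h2
    exact absurd h2 (not_le.mpr (max_lt hlt h))
  · exact le_antisymm le1 hge

lemma w_add_eq_left (ρ : NearWeight F R) {a b : R} (h : ρ.w b < ρ.w a) :
    ρ.w (a + b) = ρ.w a := by
  rw [add_comm]; exact ρ.w_add_eq_right h

lemma wb_exists_coe {x : WithBot ℕ} (hb : x ≠ ⊥) : ∃ n : ℕ, x = (n : WithBot ℕ) := by
  cases x with
  | bot => exact absurd rfl hb
  | coe m => exact ⟨m, by norm_cast⟩

lemma wb_lt_add_right {a b : WithBot ℕ} (ha : a ≠ ⊥) (hb : 0 < b) : a < a + b := by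
  obtain ⟨n, rfl⟩ := wb_exists_coe ha
  obtain ⟨m, rfl⟩ := wb_exists_coe (fun h => by simp [h] at hb : b ≠ ⊥)
  have hm : 0 < m := by exact_mod_cast hb
  exact_mod_cast (by omega : n < n + m)

lemma wb_lt_add_left {a b : WithBot ℕ} (hb : b ≠ ⊥) (ha : 0 < a) : b < a + b := by
  rw [add_comm]; exact wb_lt_add_right hb ha

lemma wb_add_ne_bot {a b : WithBot ℕ} (ha : a ≠ ⊥) (hb : b ≠ ⊥) : a + b ≠ ⊥ := by
  obtain ⟨n, rfl⟩ := wb_exists_coe ha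
  obtain ⟨m, rfl⟩ := wb_exists_coe hb
  exact_mod_cast (by simp : ((n + m : ℕ) : WithBot ℕ) ≠ ⊥)

lemma nval_coe (ρ : NearWeight F R) {f : R} (hf : f ≠ 0) :
    ρ.w f = ((ρ.nval f : ℕ) : WithBot ℕ) := by
  obtain ⟨n, hn⟩ := wb_exists_coe (ρ.w_ne_bot hf)
  have h1 : ρ.nval f = n := by rw [nval, hn]; norm_cast
  rw [h1, hn]

lemma nval_add_of_w (ρ : NearWeight F R) {f g h : R} (hf : f ≠ 0) (hg : g ≠ 0)
    (hh : h ≠ 0) (hw : ρ.w h = ρ.w f + ρ.w g) :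
    ρ.nval h = ρ.nval f + ρ.nval g := by
  rw [nval_coe ρ hf, nval_coe ρ hg, nval_coe ρ hh] at hw
  exact_mod_cast hw


lemma key (hinj : Function.Injective (algebraMap F R)) (ρ σ : NearWeight F R)
    (hU : ρ.U ∩ σ.U = Set.range (algebraMap F R)) (f g : R) (hf : f ≠ 0) (hg : g ≠ 0) :
    ∃ h : R, (h = f * g ∨ h = f + f * g ∨ h = g + f * g ∨ h = f + g) ∧ h ≠ 0 ∧
      ρ.w h = ρ.w f + ρ.w g ∧ σ.w h = σ.w f + σ.w g := by
  have w1ρ : ρ.w 1 = 0 := w_one hinj ρ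
  have w1σ : σ.w 1 = 0 := w_one hinj σ
  by_cases hfs : f ∈ Set.range (algebraMap F R)
  · obtain ⟨c, rfl⟩ := hfs
    have hc : c ≠ 0 := fun h => hf (by rw [h, map_zero])
    have hsm : algebraMap F R c * g = c • g := (Algebra.smul_def c g).symm
    have hne : algebraMap F R c * g ≠ 0 := by
      rw [hsm]; intro h0; apply hg
      have := congrArg (fun x => c⁻¹ • x) h0
      simpa [inv_smul_smul₀ hc] using this
    have hwf : ∀ τ : NearWeight F R, τ.w 1 = 0 → τ.w (algebraMap F R c) = 0 := by
      intro τ h1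
      rw [Algebra.algebraMap_eq_smul_one, τ.N1 c 1 hc, h1]
    refine ⟨algebraMap F R c * g, Or.inl rfl, hne, ?_, ?_⟩
    · rw [hsm, ρ.N1 c g hc, hwf ρ w1ρ, zero_add]
    · rw [hsm, σ.N1 c g hc, hwf σ w1σ, zero_add]
  by_cases hgs : g ∈ Set.range (algebraMap F R)
  · obtain ⟨c, rfl⟩ := hgs
    have hc : c ≠ 0 := fun h => hg (by rw [h, map_zero])
    have hsm : f * algebraMap F R c = c • f := by
      rw [Algebra.smul_def, mul_comm]
    have hne : f * algebraMap F R c ≠ 0 := by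
      rw [hsm]; intro h0; apply hf
      have := congrArg (fun x => c⁻¹ • x) h0
      simpa [inv_smul_smul₀ hc] using this
    have hwf : ∀ τ : NearWeight F R, τ.w 1 = 0 → τ.w (algebraMap F R c) = 0 := by
      intro τ h1
      rw [Algebra.algebraMap_eq_smul_one, τ.N1 c 1 hc, h1]
    refine ⟨f * algebraMap F R c, Or.inl rfl, hne, ?_, ?_⟩
    · rw [hsm, ρ.N1 c f hc, hwf ρ w1ρ, add_zero]
    · rw [hsm, σ.N1 c f hc, hwf σ w1σ, add_zero]
  have hnotU : ∀ x : R, x ∉ Set.range (algebraMap F R) → ¬(ρ.w x ≤ 0 ∧ σ.w x ≤ 0) := by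
    intro x hx h
    obtain ⟨h1, h2⟩ := h
    have hmem : x ∈ ρ.U ∩ σ.U :=
      ⟨show ρ.w x ≤ ρ.w 1 by rw [w1ρ]; exact h1,
       show σ.w x ≤ σ.w 1 by rw [w1σ]; exact h2⟩
    rw [hU] at hmem
    exact hx hmem
  rcases le_or_gt (ρ.w f) 0 with hfρ | hfρ
  · have hfρ0 : ρ.w f = 0 := ρ.norm0 f hf (by rw [w1ρ]; exact hfρ)
    rcases le_or_gt (σ.w f) 0 with hfσ | hfσ
    · exact absurd ⟨hfρ, hfσ⟩ (hnotU f hfs)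
    -- f = (U, M)
    rcases le_or_gt (ρ.w g) 0 with hgρ | hgρ
    · have hgρ0 : ρ.w g = 0 := ρ.norm0 g hg (by rw [w1ρ]; exact hgρ)
      rcases le_or_gt (σ.w g) 0 with hgσ | hgσ
      · exact absurd ⟨hgρ, hgσ⟩ (hnotU g hgs)
      · -- (UM, UM) : f*g
        have hσ : σ.w (f*g) = σ.w f + σ.w g :=
          σ.N5' f g (by rw [w1σ]; exact hfσ) (by rw [w1σ]; exact hgσ)
        have hne : f*g ≠ 0 := σ.ne_zero_of_w
          (by rw [hσ]; exact wb_add_ne_bot (σ.w_ne_bot hf) (σ.w_ne_bot hg))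
        have hρ : ρ.w (f*g) = 0 := ρ.norm0 _ hne
          (by rw [w1ρ]; exact (ρ.N5 f g).trans (le_of_eq (by rw [hfρ0, hgρ0, add_zero])))
        exact ⟨f*g, Or.inl rfl, hne, by rw [hρ, hfρ0, hgρ0, add_zero], hσ⟩
    · rcases le_or_gt (σ.w g) 0 with hgσ | hgσ
      · -- (UM, MU) : f + g
        have hgσ0 : σ.w g = 0 := σ.norm0 g hg (by rw [w1σ]; exact hgσ)
        have h1 : ρ.w f < ρ.w g := by rw [hfρ0]; exact hgρ
        have h2 : σ.w g < σ.w f := by rw [hgσ0]; exact hfσ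
        refine ⟨f + g, Or.inr (Or.inr (Or.inr rfl)), ?_, ?_, ?_⟩
        · exact ρ.ne_zero_of_w (by rw [ρ.w_add_eq_right h1]; exact ρ.w_ne_bot hg)
        · rw [ρ.w_add_eq_right h1, hfρ0, zero_add]
        · rw [σ.w_add_eq_left h2, hgσ0, add_zero]
      · -- (UM, MM) : f*g or g + f*g
        have hσ : σ.w (f*g) = σ.w f + σ.w g :=
          σ.N5' f g (by rw [w1σ]; exact hfσ) (by rw [w1σ]; exact hgσ)
        have hne : f*g ≠ 0 := σ.ne_zero_of_w
          (by rw [hσ]; exact wb_add_ne_bot (σ.w_ne_bot hf) (σ.w_ne_bot hg))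
        have hle : ρ.w (f*g) ≤ ρ.w g :=
          (ρ.N5 f g).trans (le_of_eq (by rw [hfρ0, zero_add]))
        rcases eq_or_lt_of_le hle with heq | hlt
        · exact ⟨f*g, Or.inl rfl, hne, by rw [heq, hfρ0, zero_add], hσ⟩
        · have h2 : σ.w g < σ.w (f*g) := by
            rw [hσ]; exact wb_lt_add_left (σ.w_ne_bot hg) hfσ
          refine ⟨g + f*g, Or.inr (Or.inr (Or.inl rfl)), ?_, ?_, ?_⟩
          · exact ρ.ne_zero_of_w (by rw [ρ.w_add_eq_left hlt]; exact ρ.w_ne_bot hg)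
          · rw [ρ.w_add_eq_left hlt, hfρ0, zero_add]
          · rw [σ.w_add_eq_right h2, hσ]
  · rcases le_or_gt (σ.w f) 0 with hfσ | hfσ
    · have hfσ0 : σ.w f = 0 := σ.norm0 f hf (by rw [w1σ]; exact hfσ)
      -- f = (M, U)
      rcases le_or_gt (ρ.w g) 0 with hgρ | hgρ
      · have hgρ0 : ρ.w g = 0 := ρ.norm0 g hg (by rw [w1ρ]; exact hgρ)
        rcases le_or_gt (σ.w g) 0 with hgσ | hgσ
        · exact absurd ⟨hgρ, hgσ⟩ (hnotU g hgs)
        · -- (MU, UM) : f + g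
          have h1 : ρ.w g < ρ.w f := by rw [hgρ0]; exact hfρ
          have h2 : σ.w f < σ.w g := by rw [hfσ0]; exact hgσ
          refine ⟨f + g, Or.inr (Or.inr (Or.inr rfl)), ?_, ?_, ?_⟩
          · exact ρ.ne_zero_of_w (by rw [ρ.w_add_eq_left h1]; exact ρ.w_ne_bot hf)
          · rw [ρ.w_add_eq_left h1, hgρ0, add_zero]
          · rw [σ.w_add_eq_right h2, hfσ0, zero_add]
      · rcases le_or_gt (σ.w g) 0 with hgσ | hgσ
        · -- (MU, MU) : f*g
          have hgσ0 : σ.w g = 0 := σ.norm0 g hg (by rw [w1σ]; exact hgσ)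
          have hρ : ρ.w (f*g) = ρ.w f + ρ.w g :=
            ρ.N5' f g (by rw [w1ρ]; exact hfρ) (by rw [w1ρ]; exact hgρ)
          have hne : f*g ≠ 0 := ρ.ne_zero_of_w
            (by rw [hρ]; exact wb_add_ne_bot (ρ.w_ne_bot hf) (ρ.w_ne_bot hg))
          have hσ : σ.w (f*g) = 0 := σ.norm0 _ hne
            (by rw [w1σ]; exact (σ.N5 f g).trans (le_of_eq (by rw [hfσ0, hgσ0, add_zero])))
          exact ⟨f*g, Or.inl rfl, hne, hρ, by rw [hσ, hfσ0, hgσ0, add_zero]⟩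
        · -- (MU, MM) : f*g or g + f*g
          have hρ : ρ.w (f*g) = ρ.w f + ρ.w g :=
            ρ.N5' f g (by rw [w1ρ]; exact hfρ) (by rw [w1ρ]; exact hgρ)
          have hne : f*g ≠ 0 := ρ.ne_zero_of_w
            (by rw [hρ]; exact wb_add_ne_bot (ρ.w_ne_bot hf) (ρ.w_ne_bot hg))
          have hle : σ.w (f*g) ≤ σ.w g :=
            (σ.N5 f g).trans (le_of_eq (by rw [hfσ0, zero_add]))
          rcases eq_or_lt_of_le hle with heq | hlt
          · exact ⟨f*g, Or.inl rfl, hne, hρ, by rw [heq, hfσ0, zero_add]⟩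
          · have h2 : ρ.w g < ρ.w (f*g) := by
              rw [hρ]; exact wb_lt_add_left (ρ.w_ne_bot hg) hfρ
            refine ⟨g + f*g, Or.inr (Or.inr (Or.inl rfl)), ?_, ?_, ?_⟩
            · exact σ.ne_zero_of_w (by rw [σ.w_add_eq_left hlt]; exact σ.w_ne_bot hg)
            · rw [ρ.w_add_eq_right h2, hρ]
            · rw [σ.w_add_eq_left hlt, hfσ0, zero_add]
    · -- f = (M, M)
      rcases le_or_gt (ρ.w g) 0 with hgρ | hgρ
      · have hgρ0 : ρ.w g = 0 := ρ.norm0 g hg (by rw [w1ρ]; exact hgρ)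
        rcases le_or_gt (σ.w g) 0 with hgσ | hgσ
        · exact absurd ⟨hgρ, hgσ⟩ (hnotU g hgs)
        · -- (MM, UM) : f*g or f + f*g
          have hσ : σ.w (f*g) = σ.w f + σ.w g :=
            σ.N5' f g (by rw [w1σ]; exact hfσ) (by rw [w1σ]; exact hgσ)
          have hne : f*g ≠ 0 := σ.ne_zero_of_w
            (by rw [hσ]; exact wb_add_ne_bot (σ.w_ne_bot hf) (σ.w_ne_bot hg))
          have hle : ρ.w (f*g) ≤ ρ.w f :=
            (ρ.N5 f g).trans (le_of_eq (by rw [hgρ0, add_zero]))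
          rcases eq_or_lt_of_le hle with heq | hlt
          · exact ⟨f*g, Or.inl rfl, hne, by rw [heq, hgρ0, add_zero], hσ⟩
          · have h2 : σ.w f < σ.w (f*g) := by
              rw [hσ]; exact wb_lt_add_right (σ.w_ne_bot hf) hgσ
            refine ⟨f + f*g, Or.inr (Or.inl rfl), ?_, ?_, ?_⟩
            · exact ρ.ne_zero_of_w (by rw [ρ.w_add_eq_left hlt]; exact ρ.w_ne_bot hf)
            · rw [ρ.w_add_eq_left hlt, hgρ0, add_zero]
            · rw [σ.w_add_eq_right h2, hσ]
      · rcases le_or_gt (σ.w g) 0 with hgσ | hgσ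
        · -- (MM, MU) : f*g or f + f*g
          have hgσ0 : σ.w g = 0 := σ.norm0 g hg (by rw [w1σ]; exact hgσ)
          have hρ : ρ.w (f*g) = ρ.w f + ρ.w g :=
            ρ.N5' f g (by rw [w1ρ]; exact hfρ) (by rw [w1ρ]; exact hgρ)
          have hne : f*g ≠ 0 := ρ.ne_zero_of_w
            (by rw [hρ]; exact wb_add_ne_bot (ρ.w_ne_bot hf) (ρ.w_ne_bot hg))
          have hle : σ.w (f*g) ≤ σ.w f :=
            (σ.N5 f g).trans (le_of_eq (by rw [hgσ0, add_zero]))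
          rcases eq_or_lt_of_le hle with heq | hlt
          · exact ⟨f*g, Or.inl rfl, hne, hρ, by rw [heq, hgσ0, add_zero]⟩
          · have h2 : ρ.w f < ρ.w (f*g) := by
              rw [hρ]; exact wb_lt_add_right (ρ.w_ne_bot hf) hgρ
            refine ⟨f + f*g, Or.inr (Or.inl rfl), ?_, ?_, ?_⟩
            · exact σ.ne_zero_of_w (by rw [σ.w_add_eq_left hlt]; exact σ.w_ne_bot hf)
            · rw [ρ.w_add_eq_right h2, hρ]
            · rw [σ.w_add_eq_left hlt, hgσ0, add_zero]
        · -- (MM, MM) : f*g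
          have hρ : ρ.w (f*g) = ρ.w f + ρ.w g :=
            ρ.N5' f g (by rw [w1ρ]; exact hfρ) (by rw [w1ρ]; exact hgρ)
          have hσ : σ.w (f*g) = σ.w f + σ.w g :=
            σ.N5' f g (by rw [w1σ]; exact hfσ) (by rw [w1σ]; exact hgσ)
          have hne : f*g ≠ 0 := ρ.ne_zero_of_w
            (by rw [hρ]; exact wb_add_ne_bot (ρ.w_ne_bot hf) (ρ.w_ne_bot hg))
          exact ⟨f*g, Or.inl rfl, hne, hρ, hσ⟩

end NearWeight

variable {F R : Type*} [Field F] [CommRing R] [Algebra F R]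

theorem stmt2
    (hinj : Function.Injective (algebraMap F R))
    (hsur : ¬ Function.Surjective (algebraMap F R))
    (ρ σ : NearWeight F R) (hwa : NearWeight.WellAgreeing ρ σ) :
    (∀ S : Set R, (∀ a ∈ S, ∀ b ∈ S, a + b ∈ S) → (∀ a ∈ S, ∀ b ∈ S, a * b ∈ S) →
      ∀ a ∈ NearWeight.Hset ρ σ S, ∀ b ∈ NearWeight.Hset ρ σ S,
        a + b ∈ NearWeight.Hset ρ σ S) ∧
    (∀ R' : Subalgebra F R,
      ∀ a ∈ NearWeight.Hset ρ σ (R' : Set R), ∀ b ∈ NearWeight.Hset ρ σ (R' : Set R),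
        a + b ∈ NearWeight.Hset ρ σ (R' : Set R)) := by
  obtain ⟨hfin, hU⟩ := hwa
  have main : ∀ S : Set R, (∀ a ∈ S, ∀ b ∈ S, a + b ∈ S) → (∀ a ∈ S, ∀ b ∈ S, a * b ∈ S) →
      ∀ a ∈ NearWeight.Hset ρ σ S, ∀ b ∈ NearWeight.Hset ρ σ S,
        a + b ∈ NearWeight.Hset ρ σ S := by
    intro S hadd hmul a ha b hb
    obtain ⟨f, hfS, hf, hfa⟩ := ha
    obtain ⟨g, hgS, hg, hgb⟩ := hb
    obtain ⟨h, hcase, hh0, hρ, hσ⟩ := NearWeight.key hinj ρ σ hU f g hf hg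
    refine ⟨h, ?_, hh0, ?_⟩
    · rcases hcase with rfl | rfl | rfl | rfl
      · exact hmul f hfS g hgS
      · exact hadd f hfS _ (hmul f hfS g hgS)
      · exact hadd g hgS _ (hmul f hfS g hgS)
      · exact hadd f hfS g hgS
    · rw [← hfa, ← hgb, NearWeight.nval_add_of_w ρ hf hg hh0 hρ,
        NearWeight.nval_add_of_w σ hf hg hh0 hσ]
      rfl
  exact ⟨main, fun R' => main R' (fun a ha b hb => add_mem ha hb)
    (fun a ha b hb => mul_mem ha hb)⟩
end

section
/- Let ρ and σ be two well agreeing near weights on R. For every n ∈ ℕ, n is a gap of H̄_x if and only if y_H(n) is a gap of H̄_y. In particular, the numerical semigroups H̄_x and H̄_y have equal genus. -/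
variable {F R : Type*} [Field F] [CommRing R] [Algebra F R]

private lemma nw_w_eq (ρ : NearWeight F R) {f : R} (hf : f ≠ 0) :
    ρ.w f = (ρ.nval f : WithBot ℕ) := by
  cases h : ρ.w f with
  | bot => exact absurd ((ρ.N0 f).mp h) hf
  | coe k => rw [NearWeight.nval, h]; rfl

private lemma nw_key (ρ σ : NearWeight F R) {f g : R} (hf : f ≠ 0)
    (hσ : σ.w f = σ.w g) (hm : σ.w 1 < σ.w f) (hρ : ρ.w g < ρ.w f) :
    ∃ h : R, h ≠ 0 ∧ ρ.w h = ρ.w f ∧ σ.w h < σ.w f := by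
  obtain ⟨c, hc, hlt⟩ := σ.N4 f g hm (hσ ▸ hm) hσ
  have hρcg : ρ.w (c • g) = ρ.w g := ρ.N1 c g hc
  have hneg : ρ.w (-(c • g)) = ρ.w g := by
    rw [← neg_smul]; exact ρ.N1 (-c) g (neg_ne_zero.mpr hc)
  have hsub : ρ.w (f - c • g) ≤ ρ.w f := by
    calc ρ.w (f - c • g) = ρ.w (f + -(c • g)) := by rw [sub_eq_add_neg]
    _ ≤ max (ρ.w f) (ρ.w (-(c • g))) := ρ.N2 _ _
    _ = max (ρ.w f) (ρ.w g) := by rw [hneg]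
    _ = ρ.w f := max_eq_left hρ.le
  have heq : ρ.w (f - c • g) = ρ.w f := by
    apply le_antisymm hsub
    have h2 : ρ.w f ≤ max (ρ.w (f - c • g)) (ρ.w (c • g)) := by
      have := ρ.N2 (f - c • g) (c • g)
      simpa using this
    rw [hρcg] at h2
    rcases max_cases (ρ.w (f - c • g)) (ρ.w g) with ⟨h3, _⟩ | ⟨h3, _⟩
    · rwa [h3] at h2
    · rw [h3] at h2; exact absurd (lt_of_le_of_lt h2 hρ) (lt_irrefl _)
  refine ⟨f - c • g, ?_, heq, hlt⟩
  intro h0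
  rw [h0, (ρ.N0 0).mpr rfl] at heq
  exact hf ((ρ.N0 f).mp heq.symm)

theorem stmt4
    (hinj : Function.Injective (algebraMap F R))
    (hsur : ¬ Function.Surjective (algebraMap F R))
    (ρ σ : NearWeight F R) (hwa : NearWeight.WellAgreeing ρ σ) :
    (∀ n : ℕ, n ∉ NearWeight.Hbarx ρ σ ↔ NearWeight.yH ρ σ n ∉ NearWeight.Hbary ρ σ) ∧
    (NearWeight.Hbarx ρ σ)ᶜ.ncard = (NearWeight.Hbary ρ σ)ᶜ.ncard := by
  classical
  set H := NearWeight.Hset ρ σ Set.univ with hH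
  have h1 : (1 : R) ≠ 0 := by
    intro h
    have h2 : algebraMap F R 1 = algebraMap F R 0 := by rw [map_one, map_zero]; exact h
    exact one_ne_zero (hinj h2)
  have hρ1 : ρ.w 1 = 0 := ρ.norm0 1 h1 le_rfl
  have hσ1 : σ.w 1 = 0 := σ.norm0 1 h1 le_rfl
  have hnvρ1 : ρ.nval 1 = 0 := by simp [NearWeight.nval, hρ1]
  have hnvσ1 : σ.nval 1 = 0 := by simp [NearWeight.nval, hσ1]
  have h00 : ((0 : ℕ), (0 : ℕ)) ∈ H := ⟨1, trivial, h1, by rw [hnvρ1, hnvσ1]⟩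
  have memH : ∀ f : R, f ≠ 0 → (ρ.nval f, σ.nval f) ∈ H := fun f hf => ⟨f, trivial, hf, rfl⟩
  -- nonemptiness of fibers
  have hyne : ∀ n : ℕ, {m | (n, m) ∈ H}.Nonempty := by
    intro n
    have hfin : ((fun m : ℕ => (n, m)) ⁻¹' Hᶜ).Finite := by
      apply hwa.1.preimage
      intro a _ b _ hab
      simpa using congrArg Prod.snd hab
    have hinfc : ((fun m : ℕ => (n, m)) ⁻¹' Hᶜ)ᶜ.Infinite := hfin.infinite_compl
    obtain ⟨m, hm⟩ := hinfc.nonempty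
    exact ⟨m, by simpa using hm⟩
  have hxne : ∀ m : ℕ, {k | (k, m) ∈ H}.Nonempty := by
    intro m
    have hfin : ((fun k : ℕ => (k, m)) ⁻¹' Hᶜ).Finite := by
      apply hwa.1.preimage
      intro a _ b _ hab
      simpa using congrArg Prod.fst hab
    have hinfc : ((fun k : ℕ => (k, m)) ⁻¹' Hᶜ)ᶜ.Infinite := hfin.infinite_compl
    obtain ⟨k, hk⟩ := hinfc.nonempty
    exact ⟨k, by simpa using hk⟩
  have hyH_mem : ∀ n : ℕ, (n, NearWeight.yH ρ σ n) ∈ H := fun n => Nat.sInf_mem (hyne n)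
  have hyH_min : ∀ n m : ℕ, (n, m) ∈ H → NearWeight.yH ρ σ n ≤ m := fun n m h => Nat.sInf_le h
  have hxH_mem : ∀ m : ℕ, (NearWeight.xH ρ σ m, m) ∈ H := fun m => Nat.sInf_mem (hxne m)
  have hxH_min : ∀ m k : ℕ, (k, m) ∈ H → NearWeight.xH ρ σ m ≤ k := fun m k h => Nat.sInf_le h
  have hX0 : (0 : ℕ) ∈ NearWeight.Hbarx ρ σ := h00
  have hY0 : (0 : ℕ) ∈ NearWeight.Hbary ρ σ := h00
  -- Claim 1 : gaps of Hbarx map to gaps of Hbary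
  have claim1 : ∀ n : ℕ, n ∉ NearWeight.Hbarx ρ σ →
      NearWeight.yH ρ σ n ∉ NearWeight.Hbary ρ σ := by
    intro n hn hmem
    set m := NearWeight.yH ρ σ n with hm
    have hm0 : m ≠ 0 := by
      intro h
      apply hn
      have := hyH_mem n
      rw [← hm, h] at this
      exact this
    have hn0 : n ≠ 0 := by
      rintro rfl; exact hn hX0
    obtain ⟨f, -, hf0, hf⟩ := hyH_mem n
    have hfρ : ρ.nval f = n := congrArg Prod.fst hf
    have hfσ : σ.nval f = m := congrArg Prod.snd hf
    obtain ⟨g, -, hg0, hg⟩ := hmem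
    have hgρ : ρ.nval g = 0 := congrArg Prod.fst hg
    have hgσ : σ.nval g = m := congrArg Prod.snd hg
    have hσfg : σ.w f = σ.w g := by rw [nw_w_eq σ hf0, nw_w_eq σ hg0, hfσ, hgσ]
    have hm' : σ.w 1 < σ.w f := by
      rw [hσ1, nw_w_eq σ hf0, hfσ]
      exact_mod_cast Nat.pos_of_ne_zero hm0
    have hρgf : ρ.w g < ρ.w f := by
      rw [nw_w_eq ρ hf0, nw_w_eq ρ hg0, hfρ, hgρ]
      exact_mod_cast Nat.pos_of_ne_zero hn0
    obtain ⟨h, hh0, hhρ, hhσ⟩ := nw_key ρ σ hf0 hσfg hm' hρgf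
    have hhn : ρ.nval h = n := by
      rw [nw_w_eq ρ hh0, nw_w_eq ρ hf0, hfρ] at hhρ
      exact_mod_cast hhρ
    have hhm : σ.nval h < m := by
      rw [nw_w_eq σ hh0, nw_w_eq σ hf0, hfσ] at hhσ
      exact_mod_cast hhσ
    have : m ≤ σ.nval h := hyH_min n _ (by rw [← hhn]; exact memH h hh0)
    omega
  -- Claim 1' : gaps of Hbary map to gaps of Hbarx (via xH)
  have claim1' : ∀ m : ℕ, m ∉ NearWeight.Hbary ρ σ →
      NearWeight.xH ρ σ m ∉ NearWeight.Hbarx ρ σ := by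
    intro m hm hmem
    set n := NearWeight.xH ρ σ m with hn
    have hn0 : n ≠ 0 := by
      intro h
      apply hm
      have := hxH_mem m
      rw [← hn, h] at this
      exact this
    have hm0 : m ≠ 0 := by
      rintro rfl; exact hm hY0
    obtain ⟨f, -, hf0, hf⟩ := hxH_mem m
    have hfρ : ρ.nval f = n := congrArg Prod.fst hf
    have hfσ : σ.nval f = m := congrArg Prod.snd hf
    obtain ⟨g, -, hg0, hg⟩ := hmem
    have hgρ : ρ.nval g = n := congrArg Prod.fst hg
    have hgσ : σ.nval g = 0 := congrArg Prod.snd hg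
    have hρfg : ρ.w f = ρ.w g := by rw [nw_w_eq ρ hf0, nw_w_eq ρ hg0, hfρ, hgρ]
    have hn' : ρ.w 1 < ρ.w f := by
      rw [hρ1, nw_w_eq ρ hf0, hfρ]
      exact_mod_cast Nat.pos_of_ne_zero hn0
    have hσgf : σ.w g < σ.w f := by
      rw [nw_w_eq σ hf0, nw_w_eq σ hg0, hfσ, hgσ]
      exact_mod_cast Nat.pos_of_ne_zero hm0
    obtain ⟨h, hh0, hhσ, hhρ⟩ := nw_key σ ρ hf0 hρfg hn' hσgf
    have hhm : σ.nval h = m := by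
      rw [nw_w_eq σ hh0, nw_w_eq σ hf0, hfσ] at hhσ
      exact_mod_cast hhσ
    have hhn : ρ.nval h < n := by
      rw [nw_w_eq ρ hh0, nw_w_eq ρ hf0, hfρ] at hhρ
      exact_mod_cast hhρ
    have : n ≤ ρ.nval h := hxH_min m _ (by rw [← hhm]; exact memH h hh0)
    omega
  -- Claim 3 : xH ∘ yH = id on gaps of Hbarx
  have claim3 : ∀ n : ℕ, n ∉ NearWeight.Hbarx ρ σ →
      NearWeight.xH ρ σ (NearWeight.yH ρ σ n) = n := by
    intro n hn
    set m := NearWeight.yH ρ σ n with hm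
    have hm0 : m ≠ 0 := by
      intro h
      apply hn
      have := hyH_mem n
      rw [← hm, h] at this
      exact this
    have hle : NearWeight.xH ρ σ m ≤ n := hxH_min m n (hyH_mem n)
    rcases eq_or_lt_of_le hle with heq | hlt
    · exact heq
    · exfalso
      set n' := NearWeight.xH ρ σ m with hn'
      obtain ⟨f, -, hf0, hf⟩ := hyH_mem n
      have hfρ : ρ.nval f = n := congrArg Prod.fst hf
      have hfσ : σ.nval f = m := congrArg Prod.snd hf
      obtain ⟨g, -, hg0, hg⟩ := hxH_mem m
      have hgρ : ρ.nval g = n' := congrArg Prod.fst hg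
      have hgσ : σ.nval g = m := congrArg Prod.snd hg
      have hσfg : σ.w f = σ.w g := by rw [nw_w_eq σ hf0, nw_w_eq σ hg0, hfσ, hgσ]
      have hm' : σ.w 1 < σ.w f := by
        rw [hσ1, nw_w_eq σ hf0, hfσ]
        exact_mod_cast Nat.pos_of_ne_zero hm0
      have hρgf : ρ.w g < ρ.w f := by
        rw [nw_w_eq ρ hf0, nw_w_eq ρ hg0, hfρ, hgρ]
        exact_mod_cast hlt
      obtain ⟨h, hh0, hhρ, hhσ⟩ := nw_key ρ σ hf0 hσfg hm' hρgf
      have hhn : ρ.nval h = n := by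
        rw [nw_w_eq ρ hh0, nw_w_eq ρ hf0, hfρ] at hhρ
        exact_mod_cast hhρ
      have hhm : σ.nval h < m := by
        rw [nw_w_eq σ hh0, nw_w_eq σ hf0, hfσ] at hhσ
        exact_mod_cast hhσ
      have : m ≤ σ.nval h := hyH_min n _ (by rw [← hhn]; exact memH h hh0)
      omega
  -- Claim 3' : yH ∘ xH = id on gaps of Hbary
  have claim3' : ∀ m : ℕ, m ∉ NearWeight.Hbary ρ σ →
      NearWeight.yH ρ σ (NearWeight.xH ρ σ m) = m := by
    intro m hm
    set n := NearWeight.xH ρ σ m with hn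
    have hn0 : n ≠ 0 := by
      intro h
      apply hm
      have := hxH_mem m
      rw [← hn, h] at this
      exact this
    have hle : NearWeight.yH ρ σ n ≤ m := hyH_min n m (hxH_mem m)
    rcases eq_or_lt_of_le hle with heq | hlt
    · exact heq
    · exfalso
      set m' := NearWeight.yH ρ σ n with hm'
      obtain ⟨f, -, hf0, hf⟩ := hxH_mem m
      have hfρ : ρ.nval f = n := congrArg Prod.fst hf
      have hfσ : σ.nval f = m := congrArg Prod.snd hf
      obtain ⟨g, -, hg0, hg⟩ := hyH_mem n
      have hgρ : ρ.nval g = n := congrArg Prod.fst hg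
      have hgσ : σ.nval g = m' := congrArg Prod.snd hg
      have hρfg : ρ.w f = ρ.w g := by rw [nw_w_eq ρ hf0, nw_w_eq ρ hg0, hfρ, hgρ]
      have hn' : ρ.w 1 < ρ.w f := by
        rw [hρ1, nw_w_eq ρ hf0, hfρ]
        exact_mod_cast Nat.pos_of_ne_zero hn0
      have hσgf : σ.w g < σ.w f := by
        rw [nw_w_eq σ hf0, nw_w_eq σ hg0, hfσ, hgσ]
        exact_mod_cast hlt
      obtain ⟨h, hh0, hhσ, hhρ⟩ := nw_key σ ρ hf0 hρfg hn' hσgf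
      have hhm : σ.nval h = m := by
        rw [nw_w_eq σ hh0, nw_w_eq σ hf0, hfσ] at hhσ
        exact_mod_cast hhσ
      have hhn : ρ.nval h < n := by
        rw [nw_w_eq ρ hh0, nw_w_eq ρ hf0, hfρ] at hhρ
        exact_mod_cast hhρ
      have : n ≤ ρ.nval h := hxH_min m _ (by rw [← hhm]; exact memH h hh0)
      omega
  constructor
  · intro n
    constructor
    · exact claim1 n
    · intro hy hn
      apply hy
      have hy0 : NearWeight.yH ρ σ n = 0 := Nat.le_zero.mp (hyH_min n 0 hn)
      rw [hy0]
      exact hY0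
  · have himg : NearWeight.yH ρ σ '' (NearWeight.Hbarx ρ σ)ᶜ = (NearWeight.Hbary ρ σ)ᶜ := by
      ext m
      constructor
      · rintro ⟨n, hn, rfl⟩
        exact claim1 n hn
      · intro hm
        exact ⟨NearWeight.xH ρ σ m, claim1' m hm, claim3' m hm⟩
    have hinjOn : Set.InjOn (NearWeight.yH ρ σ) (NearWeight.Hbarx ρ σ)ᶜ := by
      intro a ha b hb hab
      rw [← claim3 a ha, ← claim3 b hb, hab]
    calc ((NearWeight.Hbarx ρ σ)ᶜ).ncard
        = (NearWeight.yH ρ σ '' (NearWeight.Hbarx ρ σ)ᶜ).ncard :=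
          (Set.ncard_image_of_injOn hinjOn).symm
      _ = ((NearWeight.Hbary ρ σ)ᶜ).ncard := by rw [himg]
end

section
/- Let ρ and σ be two well agreeing near weights on R, and for each a ∈ Γ choose an element φ_a ∈ R \ {0} with (ρ(φ_a), σ(φ_a)) = a. Then the family B := {φ_a : a ∈ Γ} is a basis of R as an F-vector space. -/
variable {F R : Type*} [Field F] [CommRing R] [Algebra F R]


section Helpers

open NearWeight

variable {F R : Type*} [Field F] [CommRing R] [Algebra F R]

lemma nw_w_neg (ρ : NearWeight F R) (f : R) : ρ.w (-f) = ρ.w f := by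
  rw [← neg_one_smul F f]
  exact ρ.N1 (-1) f (by norm_num)

lemma nw_w_eq_nval (ρ : NearWeight F R) {f : R} (hf : f ≠ 0) :
    ρ.w f = ((ρ.nval f : ℕ) : WithBot ℕ) := by
  have h : ρ.w f ≠ ⊥ := fun h => hf ((ρ.N0 f).1 h)
  obtain ⟨k, hk⟩ := WithBot.ne_bot_iff_exists.1 h
  have h2 : ρ.nval f = k := by simp [NearWeight.nval, ← hk]
  rw [h2, ← hk]
  norm_cast

lemma nw_add_eq_left (ρ : NearWeight F R) {f g : R} (h : ρ.w g < ρ.w f) :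
    ρ.w (f + g) = ρ.w f := by
  refine le_antisymm ((ρ.N2 f g).trans_eq (max_eq_left h.le)) ?_
  have h2 : ρ.w f ≤ max (ρ.w (f + g)) (ρ.w g) := by
    have h3 := ρ.N2 (f + g) (-g)
    rw [nw_w_neg] at h3
    simpa using h3
  by_contra hc
  push_neg at hc
  exact absurd (h2.trans_lt (max_lt hc h)) (lt_irrefl _)

lemma nw_sum_le_sup (ρ : NearWeight F R) {ι : Type*} (s : Finset ι) (f : ι → R) :
    ρ.w (∑ i ∈ s, f i) ≤ s.sup fun i => ρ.w (f i) := by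
  classical
  induction s using Finset.induction_on with
  | empty => simp [(ρ.N0 0).2 rfl]
  | @insert a s ha ih =>
    rw [Finset.sum_insert ha, Finset.sup_insert]
    exact (ρ.N2 _ _).trans (max_le_max le_rfl ih)

lemma nw_sum_w_eq (ρ : NearWeight F R) {ι : Type*} (s : Finset ι) (f : ι → R) {i₀ : ι}
    (hi₀ : i₀ ∈ s) (hlt : ∀ j ∈ s, j ≠ i₀ → ρ.w (f j) < ρ.w (f i₀)) :
    ρ.w (∑ i ∈ s, f i) = ρ.w (f i₀) := by
  classical
  rw [← Finset.add_sum_erase s f hi₀]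
  by_cases h0 : f i₀ = 0
  · have he : s.erase i₀ = ∅ := by
      rw [Finset.eq_empty_iff_forall_notMem]
      intro j hj
      have hj2 := hlt j (Finset.mem_of_mem_erase hj) (Finset.ne_of_mem_erase hj)
      rw [h0, (ρ.N0 0).2 rfl] at hj2
      simp at hj2
    simp [he]
  · have hb : (⊥ : WithBot ℕ) < ρ.w (f i₀) := by
      have : ρ.w (f i₀) ≠ ⊥ := fun h => h0 ((ρ.N0 _).1 h)
      exact this.bot_lt
    have hrest : ρ.w (∑ i ∈ s.erase i₀, f i) < ρ.w (f i₀) := by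
      refine (nw_sum_le_sup ρ _ f).trans_lt ?_
      rw [Finset.sup_lt_iff hb]
      intro j hj
      exact hlt j (Finset.mem_of_mem_erase hj) (Finset.ne_of_mem_erase hj)
    exact nw_add_eq_left ρ hrest

end Helpers

theorem stmt6
    (hinj : Function.Injective (algebraMap F R))
    (hsur : ¬ Function.Surjective (algebraMap F R))
    (ρ σ : NearWeight F R) (hwa : NearWeight.WellAgreeing ρ σ)
    (φ : NearWeight.Gamma ρ σ → R)
    (hφ0 : ∀ a, φ a ≠ 0)
    (hφ : ∀ a : NearWeight.Gamma ρ σ, (ρ.nval (φ a), σ.nval (φ a)) = (a : ℕ × ℕ)) :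
    LinearIndependent F φ ∧ Submodule.span F (Set.range φ) = ⊤ := by
  classical
  have h10 : (1 : R) ≠ 0 := by
    intro h
    exact one_ne_zero (hinj (show algebraMap F R 1 = algebraMap F R 0 by simp [h]))
  have hρ1 : ρ.w 1 = 0 := ρ.norm0 1 h10 le_rfl
  have hσ1 : σ.w 1 = 0 := σ.norm0 1 h10 le_rfl
  have memH : ∀ f : R, f ≠ 0 → (ρ.nval f, σ.nval f) ∈ NearWeight.Hset ρ σ Set.univ :=
    fun f hf => ⟨f, Set.mem_univ f, hf, rfl⟩
  have hφ1 : ∀ a : NearWeight.Gamma ρ σ, ρ.nval (φ a) = (a : ℕ × ℕ).1 :=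
    fun a => congrArg Prod.fst (hφ a)
  have hφ2 : ∀ a : NearWeight.Gamma ρ σ, σ.nval (φ a) = (a : ℕ × ℕ).2 :=
    fun a => congrArg Prod.snd (hφ a)
  have hwφρ : ∀ a : NearWeight.Gamma ρ σ,
      ρ.w (φ a) = (((a : ℕ × ℕ).1 : ℕ) : WithBot ℕ) := fun a => by
    rw [nw_w_eq_nval ρ (hφ0 a), hφ1 a]
  have hwφσ : ∀ a : NearWeight.Gamma ρ σ,
      σ.w (φ a) = (((a : ℕ × ℕ).2 : ℕ) : WithBot ℕ) := fun a => by
    rw [nw_w_eq_nval σ (hφ0 a), hφ2 a]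
  set Sp := Submodule.span F (Set.range φ) with hSpdef
  have hmemφ : ∀ a, φ a ∈ Sp := fun a => Submodule.subset_span ⟨a, rfl⟩
  have hnval1ρ : ρ.nval 1 = 0 := by simp [NearWeight.nval, hρ1]
  have hnval1σ : σ.nval 1 = 0 := by simp [NearWeight.nval, hσ1]
  have h00H : ((0, 0) : ℕ × ℕ) ∈ NearWeight.Hset ρ σ Set.univ := by
    have h := memH 1 h10
    rwa [hnval1ρ, hnval1σ] at h
  -- ===================== SPANNING =====================
  have baseA : ∀ N : ℕ, ∀ f : R, ρ.nval f = 0 → σ.nval f ≤ N → f ∈ Sp := by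
    intro N
    induction N with
    | zero =>
      intro f hr hs
      by_cases hf : f = 0
      · simp [hf]
      · have hs0 : σ.nval f = 0 := Nat.le_zero.1 hs
        have hfU : f ∈ Set.range (algebraMap F R) := by
          rw [← hwa.2]
          constructor
          · show ρ.w f ≤ ρ.w 1
            rw [nw_w_eq_nval ρ hf, hr, hρ1]; simp
          · show σ.w f ≤ σ.w 1
            rw [nw_w_eq_nval σ hf, hs0, hσ1]; simp
        obtain ⟨cf, hcf⟩ := hfU
        have hy0 : NearWeight.yH ρ σ 0 = 0 :=
          Nat.le_zero.1 (Nat.sInf_le h00H)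
        have ha0 : ((0, 0) : ℕ × ℕ) ∈ NearWeight.Gamma ρ σ :=
          Set.mem_union_left _ ⟨0, by rw [hy0]⟩
        set a₀ : NearWeight.Gamma ρ σ := ⟨(0, 0), ha0⟩ with ha₀def
        have hφU : φ a₀ ∈ Set.range (algebraMap F R) := by
          rw [← hwa.2]
          constructor
          · show ρ.w (φ a₀) ≤ ρ.w 1
            rw [hwφρ a₀, hρ1]; simp [ha₀def]
          · show σ.w (φ a₀) ≤ σ.w 1
            rw [hwφσ a₀, hσ1]; simp [ha₀def]
        obtain ⟨d, hd⟩ := hφU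
        have hd0 : d ≠ 0 := by
          intro h
          exact hφ0 a₀ (by rw [← hd, h, map_zero])
        have hfeq : f = (cf * d⁻¹) • φ a₀ := by
          rw [← hd, ← hcf, Algebra.smul_def, ← map_mul, mul_assoc,
            inv_mul_cancel₀ hd0, mul_one]
        rw [hfeq]
        exact Sp.smul_mem _ (hmemφ a₀)
    | succ N ih =>
      intro f hr hs
      by_cases hsN : σ.nval f ≤ N
      · exact ih f hr hsN
      · have hn : σ.nval f = N + 1 := le_antisymm hs (not_le.1 hsN)
        by_cases hf : f = 0
        · simp [hf]
        have hx0 : NearWeight.xH ρ σ (N + 1) = 0 := by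
          refine Nat.le_zero.1 (Nat.sInf_le ?_)
          have h := memH f hf
          rwa [hr, hn] at h
        have haΓ : ((0, N + 1) : ℕ × ℕ) ∈ NearWeight.Gamma ρ σ :=
          Set.mem_union_right _ ⟨N + 1, by rw [hx0]⟩
        set a : NearWeight.Gamma ρ σ := ⟨(0, N + 1), haΓ⟩ with hadef
        have hwf : σ.w f = ((N + 1 : ℕ) : WithBot ℕ) := by
          rw [nw_w_eq_nval σ hf, hn]
        have hwφa : σ.w (φ a) = ((N + 1 : ℕ) : WithBot ℕ) := by
          rw [hwφσ a]
        have h1f : σ.w 1 < σ.w f := by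
          rw [hσ1, hwf]
          exact_mod_cast Nat.succ_pos N
        have h1φ : σ.w 1 < σ.w (φ a) := by
          rw [hσ1, hwφa]
          exact_mod_cast Nat.succ_pos N
        obtain ⟨lam, hlam0, hlt⟩ := σ.N4 f (φ a) h1f h1φ (hwf.trans hwφa.symm)
        set f' := f - lam • φ a with hf'def
        have hfsplit : f = f' + lam • φ a := by rw [hf'def]; ring
        by_cases hf' : f' = 0
        · rw [hfsplit, hf', zero_add]
          exact Sp.smul_mem _ (hmemφ a)
        · have hρf' : ρ.nval f' = 0 := by
            have h2 : ρ.w f' ≤ max (ρ.w f) (ρ.w (lam • φ a)) := by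
              have h3 := ρ.N2 f (-(lam • φ a))
              rw [nw_w_neg] at h3
              simpa [hf'def, sub_eq_add_neg] using h3
            rw [ρ.N1 lam _ hlam0, hwφρ a, nw_w_eq_nval ρ hf, hr] at h2
            have h4 : ρ.w f' ≤ ((0 : ℕ) : WithBot ℕ) := by
              simpa [hadef] using h2
            rw [nw_w_eq_nval ρ hf'] at h4
            exact_mod_cast Nat.le_zero.1 (by exact_mod_cast h4)
          have hσf' : σ.nval f' ≤ N := by
            rw [nw_w_eq_nval σ hf', hwf] at hlt
            have : σ.nval f' < N + 1 := by exact_mod_cast hlt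
            omega
          rw [hfsplit]
          exact Sp.add_mem (ih f' hρf' hσf') (Sp.smul_mem _ (hmemφ a))
  have spanAll : ∀ N : ℕ, ∀ f : R, ρ.nval f ≤ N → f ∈ Sp := by
    intro N
    induction N with
    | zero => intro f hr; exact baseA (σ.nval f) f (Nat.le_zero.1 hr) le_rfl
    | succ N ih =>
      intro f hr
      by_cases hrN : ρ.nval f ≤ N
      · exact ih f hrN
      have hm : ρ.nval f = N + 1 := le_antisymm hr (not_le.1 hrN)
      have hf : f ≠ 0 := by
        intro h
        rw [h] at hm
        simp [NearWeight.nval, (ρ.N0 (0 : R)).2 rfl] at hm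
      have haΓ : ((N + 1, NearWeight.yH ρ σ (N + 1)) : ℕ × ℕ) ∈ NearWeight.Gamma ρ σ :=
        Set.mem_union_left _ ⟨N + 1, rfl⟩
      set a : NearWeight.Gamma ρ σ := ⟨(N + 1, NearWeight.yH ρ σ (N + 1)), haΓ⟩ with hadef
      have hwf : ρ.w f = ((N + 1 : ℕ) : WithBot ℕ) := by
        rw [nw_w_eq_nval ρ hf, hm]
      have hwφa : ρ.w (φ a) = ((N + 1 : ℕ) : WithBot ℕ) := by rw [hwφρ a]
      have h1f : ρ.w 1 < ρ.w f := by
        rw [hρ1, hwf]; exact_mod_cast Nat.succ_pos N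
      have h1φ : ρ.w 1 < ρ.w (φ a) := by
        rw [hρ1, hwφa]; exact_mod_cast Nat.succ_pos N
      obtain ⟨lam, hlam0, hlt⟩ := ρ.N4 f (φ a) h1f h1φ (hwf.trans hwφa.symm)
      set f' := f - lam • φ a with hf'def
      have hfsplit : f = f' + lam • φ a := by rw [hf'def]; ring
      by_cases hf' : f' = 0
      · rw [hfsplit, hf', zero_add]
        exact Sp.smul_mem _ (hmemφ a)
      · have hρf' : ρ.nval f' ≤ N := by
          rw [nw_w_eq_nval ρ hf', hwf] at hlt
          have : ρ.nval f' < N + 1 := by exact_mod_cast hlt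
          omega
        rw [hfsplit]
        exact Sp.add_mem (ih f' hρf') (Sp.smul_mem _ (hmemφ a))
  refine ⟨?_, ?_⟩
  · -- ===================== LINEAR INDEPENDENCE =====================
    rw [linearIndependent_iff']
    intro s c hsum i hi
    by_contra hci
    set s' := s.filter (fun a => c a ≠ 0) with hs'def
    have hsum' : ∑ a ∈ s', c a • φ a = 0 := by
      have heq := Finset.sum_filter_of_ne (s := s) (f := fun a => c a • φ a)
        (p := fun a => c a ≠ 0) (fun x _ hfx h0 => hfx (show c x • φ x = 0 by rw [h0, zero_smul]))
      rw [hs'def, heq]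
      exact hsum
    have hi' : i ∈ s' := Finset.mem_filter.2 ⟨hi, hci⟩
    have hcne : ∀ a ∈ s', c a ≠ 0 := fun a ha => (Finset.mem_filter.1 ha).2
    have hterm_ρ : ∀ a ∈ s', ρ.w (c a • φ a) = (((a : ℕ × ℕ).1 : ℕ) : WithBot ℕ) :=
      fun a ha => by rw [ρ.N1 _ _ (hcne a ha), hwφρ a]
    have hterm_σ : ∀ a ∈ s', σ.w (c a • φ a) = (((a : ℕ × ℕ).2 : ℕ) : WithBot ℕ) :=
      fun a ha => by rw [σ.N1 _ _ (hcne a ha), hwφσ a]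
    obtain ⟨b, hb, hbmax⟩ :=
      Finset.exists_max_image s' (fun a : {p // p ∈ NearWeight.Gamma ρ σ} => (a : ℕ × ℕ).1) ⟨i, hi'⟩
    set M := ((b : ℕ × ℕ)).1 with hMdef
    set T := s'.filter (fun a : {p // p ∈ NearWeight.Gamma ρ σ} => (a : ℕ × ℕ).1 = M) with hTdef
    have hbT : b ∈ T := Finset.mem_filter.2 ⟨hb, rfl⟩
    obtain ⟨t, htT, htmax⟩ :=
      Finset.exists_max_image T (fun a : {p // p ∈ NearWeight.Gamma ρ σ} => (a : ℕ × ℕ).2) ⟨b, hbT⟩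
    have htM : ((t : ℕ × ℕ)).1 = M := (Finset.mem_filter.1 htT).2
    set g := ∑ a ∈ T, c a • φ a with hgdef
    have hgh : g + ∑ a ∈ s'.filter (fun a : {p // p ∈ NearWeight.Gamma ρ σ} => ¬ (a : ℕ × ℕ).1 = M), c a • φ a = 0 := by
      rw [hgdef, hTdef, Finset.sum_filter_add_sum_filter_not]
      exact hsum'
    have hwg : σ.w g = (((t : ℕ × ℕ).2 : ℕ) : WithBot ℕ) := by
      rw [hgdef]
      rw [nw_sum_w_eq σ T _ htT ?_]
      · exact hterm_σ t (Finset.mem_filter.1 htT).1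
      · intro j hj hjt
        have hjs' := (Finset.mem_filter.1 hj).1
        rw [hterm_σ j hjs', hterm_σ t (Finset.mem_filter.1 htT).1]
        have hle := htmax j hj
        have hne : ((j : ℕ × ℕ)).2 ≠ ((t : ℕ × ℕ)).2 := by
          intro he
          exact hjt (Subtype.ext (Prod.ext ((Finset.mem_filter.1 hj).2.trans htM.symm) he))
        exact_mod_cast lt_of_le_of_ne hle hne
    have hg0 : g ≠ 0 := by
      intro h0
      rw [h0, (σ.N0 (0 : R)).2 rfl] at hwg
      simp at hwg
    have hwg_lt : ρ.w g < (M : WithBot ℕ) := by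
      have hgeq : g = -(∑ a ∈ s'.filter (fun a : {p // p ∈ NearWeight.Gamma ρ σ} => ¬ (a : ℕ × ℕ).1 = M), c a • φ a) :=
        eq_neg_of_add_eq_zero_left hgh
      rw [hgeq, nw_w_neg]
      refine (nw_sum_le_sup ρ _ _).trans_lt ?_
      refine (Finset.sup_lt_iff (by exact_mod_cast WithBot.bot_lt_coe M)).2 ?_
      intro j hj
      obtain ⟨hjs, hjM⟩ := Finset.mem_filter.1 hj
      rw [hterm_ρ j hjs]
      exact_mod_cast lt_of_le_of_ne (hbmax j hjs) hjM
    rcases t.2 with ⟨m, hm⟩ | ⟨n, hn⟩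
    · -- t = (m, yH m), so T = {t} and ρ.w g = M : contradiction
      have ht2 : ((t : ℕ × ℕ)).2 = NearWeight.yH ρ σ M := by
        have h1 : ((t : ℕ × ℕ)).1 = m := by rw [hm]
        have h2 : ((t : ℕ × ℕ)).2 = NearWeight.yH ρ σ m := by rw [hm]
        rw [h2, ← h1, htM]
      have hTsub : ∀ j ∈ T, j = t := by
        intro j hj
        have hjM := (Finset.mem_filter.1 hj).2
        have hjH : ((M, ((j : ℕ × ℕ)).2) : ℕ × ℕ) ∈ NearWeight.Hset ρ σ Set.univ := by
          have h := memH (φ j) (hφ0 j)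
          rwa [hφ1 j, hφ2 j, hjM] at h
        have h1 : NearWeight.yH ρ σ M ≤ ((j : ℕ × ℕ)).2 := Nat.sInf_le hjH
        have h2 : ((j : ℕ × ℕ)).2 = ((t : ℕ × ℕ)).2 :=
          le_antisymm (htmax j hj) (by rw [ht2]; exact h1)
        exact Subtype.ext (Prod.ext (hjM.trans htM.symm) h2)
      have hwgM : ρ.w g = (M : WithBot ℕ) := by
        rw [hgdef, nw_sum_w_eq ρ T _ htT (fun j hj hjt => absurd (hTsub j hj) hjt),
          hterm_ρ t (Finset.mem_filter.1 htT).1, htM]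
      rw [hwgM] at hwg_lt
      exact lt_irrefl _ hwg_lt
    · -- t = (xH n, n) : contradiction with minimality of xH n
      have hn2 : ((t : ℕ × ℕ)).2 = n := by rw [hn]
      have hn1 : NearWeight.xH ρ σ n = M := by
        rw [← htM, hn]
      have hσg : σ.nval g = n := by
        rw [nw_w_eq_nval σ hg0, hn2] at hwg
        exact_mod_cast hwg
      have hρgH : ((ρ.nval g, n) : ℕ × ℕ) ∈ NearWeight.Hset ρ σ Set.univ := by
        have h := memH g hg0
        rwa [hσg] at h
      have hle : NearWeight.xH ρ σ n ≤ ρ.nval g := Nat.sInf_le hρgH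
      have hlt2 : ρ.nval g < M := by
        rw [nw_w_eq_nval ρ hg0] at hwg_lt
        exact_mod_cast hwg_lt
      rw [hn1] at hle
      omega
  · -- span = top
    exact Submodule.eq_top_iff'.2 fun f => spanAll (ρ.nval f) f le_rfl
end

section
/- Let R be a commutative F-algebra admitting two well agreeing near weights ρ and σ. Then R is an integral domain. -/
variable {F R : Type*} [Field F] [CommRing R] [Algebra F R]

theorem stmt11
    (hinj : Function.Injective (algebraMap F R))
    (hsur : ¬ Function.Surjective (algebraMap F R))
    (ρ σ : NearWeight F R) (hwa : NearWeight.WellAgreeing ρ σ) :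
    IsDomain R := by
  have h1 : (1 : R) ≠ 0 := by
    intro h
    apply one_ne_zero (α := F)
    apply hinj
    simpa using h
  have hnt : Nontrivial R := ⟨1, 0, h1⟩
  have key : ∀ (τ : NearWeight F R) (g h : R), g ≠ 0 → τ.w 1 < τ.w h → g * h ≠ 0 := by
    intro τ g h hg hh
    have h0 : τ.w 0 < τ.w g := by
      rw [(τ.N0 0).mpr rfl]
      exact lt_of_le_of_ne bot_le (fun e => hg ((τ.N0 g).mp e.symm))
    have hlt := τ.N3' 0 g h h0 hh
    rw [zero_mul, (τ.N0 0).mpr rfl] at hlt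
    intro he
    rw [he, (τ.N0 0).mpr rfl] at hlt
    exact lt_irrefl _ hlt
  have hnzd : NoZeroDivisors R := by
    constructor
    intro f g hfg
    by_contra hc
    push_neg at hc
    obtain ⟨hf, hg⟩ := hc
    have hfU : ∀ τ : NearWeight F R, f ∈ τ.U := by
      intro τ
      by_contra h
      simp only [NearWeight.U, Set.mem_setOf_eq, not_le] at h
      exact key τ g f hg h (by rwa [mul_comm])
    have hgU : ∀ τ : NearWeight F R, g ∈ τ.U := by
      intro τ
      by_contra h
      simp only [NearWeight.U, Set.mem_setOf_eq, not_le] at h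
      exact key τ f g hf h hfg
    have hfr : f ∈ Set.range (algebraMap F R) := by
      rw [← hwa.2]; exact ⟨hfU ρ, hfU σ⟩
    have hgr : g ∈ Set.range (algebraMap F R) := by
      rw [← hwa.2]; exact ⟨hgU ρ, hgU σ⟩
    obtain ⟨c, hc⟩ := hfr
    obtain ⟨d, hd⟩ := hgr
    have hcne : c ≠ 0 := fun e => hf (by rw [← hc, e, map_zero])
    have hdne : d ≠ 0 := fun e => hg (by rw [← hd, e, map_zero])
    apply mul_ne_zero hcne hdne
    apply hinj
    rw [map_mul, map_zero, hc, hd, hfg]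
  exact NoZeroDivisors.to_isDomain R
end

section
/- Let ρ and σ be two well agreeing near weights on R, let f ∈ R \ {0}, and let I := (f) be the principal ideal of R generated by f. Then H(I) ∪ {(0,0)} is closed under addition and its complement ℕ² \ (H(I) ∪ {(0,0)}) is finite. -/
section NWXAux

open NearWeight

variable {F R : Type*} [Field F] [CommRing R] [Algebra F R]

private lemma nwx_cast_le {m n : ℕ} : ((m:ℕ) : WithBot ℕ) ≤ ((n:ℕ) : WithBot ℕ) ↔ m ≤ n := by
  simp only [Nat.cast_withBot]; exact WithBot.coe_le_coe

private lemma nwx_cast_lt {m n : ℕ} : ((m:ℕ) : WithBot ℕ) < ((n:ℕ) : WithBot ℕ) ↔ m < n := by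
  simp only [Nat.cast_withBot]; exact WithBot.coe_lt_coe

private lemma nwx_cast_inj {m n : ℕ} : (((m:ℕ) : WithBot ℕ) = ((n:ℕ) : WithBot ℕ)) ↔ m = n := by
  simp only [Nat.cast_withBot]; exact WithBot.coe_inj

private lemma nwx_cast_add (m n : ℕ) :
    ((m + n : ℕ) : WithBot ℕ) = ((m:ℕ) : WithBot ℕ) + ((n:ℕ):WithBot ℕ) := by
  simp only [Nat.cast_withBot]; exact WithBot.coe_add m n

private lemma nwx_cast_ne_bot (n : ℕ) : ((n:ℕ):WithBot ℕ) ≠ ⊥ := by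
  simp only [Nat.cast_withBot]; exact WithBot.coe_ne_bot

private lemma nwx_cast_zero : ((0:ℕ) : WithBot ℕ) = 0 := Nat.cast_zero

private lemma nwx_cast_pos {n : ℕ} : (0 : WithBot ℕ) < ((n:ℕ):WithBot ℕ) ↔ 0 < n := by
  rw [← nwx_cast_zero]; exact nwx_cast_lt

private lemma nwx_rep' {x : WithBot ℕ} (h : x ≠ ⊥) : ∃ n : ℕ, x = ((n:ℕ) : WithBot ℕ) := by
  obtain ⟨a, rfl⟩ := WithBot.ne_bot_iff_exists.mp h
  exact ⟨a, by simp only [Nat.cast_withBot]⟩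

private lemma nwx_lt_succ {x : WithBot ℕ} {s : ℕ} (h : x < ((s+1:ℕ) : WithBot ℕ)) :
    x ≤ ((s:ℕ):WithBot ℕ) := by
  rcases eq_or_ne x ⊥ with rfl | hx
  · exact bot_le
  · obtain ⟨n, rfl⟩ := nwx_rep' hx
    exact nwx_cast_le.mpr (Nat.lt_succ_iff.mp (nwx_cast_lt.mp h))

private lemma nwx_ne_bot (ρ : NearWeight F R) {x : R} (hx : x ≠ 0) : ρ.w x ≠ ⊥ :=
  fun h => hx ((ρ.N0 x).1 h)

private lemma nwx_rep (ρ : NearWeight F R) {x : R} (hx : x ≠ 0) :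
    ∃ n : ℕ, ρ.w x = ((n:ℕ):WithBot ℕ) := nwx_rep' (nwx_ne_bot ρ hx)

private lemma nwx_pos_ne_zero (ρ : NearWeight F R) {x : R} (h : 0 < ρ.w x) : x ≠ 0 := by
  intro h0
  rw [h0, (ρ.N0 0).2 rfl] at h
  exact not_lt_bot h

private lemma nwx_eq_zero (ρ : NearWeight F R) (h1 : ρ.w 1 = 0) {x : R} (hx : x ≠ 0)
    (hle : ρ.w x ≤ 0) : ρ.w x = 0 := ρ.norm0 x hx (by rw [h1]; exact hle)

private lemma nwx_nval (ρ : NearWeight F R) {x : R} (hx : x ≠ 0) :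
    ρ.w x = ((ρ.nval x : ℕ) : WithBot ℕ) := by
  obtain ⟨n, hn⟩ := nwx_rep ρ hx
  have hv : ρ.nval x = n := by
    unfold NearWeight.nval
    rw [hn]
    simp only [Nat.cast_withBot]
    exact WithBot.unbotD_coe _ _
  rw [hv, hn]

private lemma nwx_nval_eq (ρ : NearWeight F R) {x : R} {m : ℕ} (hx : x ≠ 0)
    (h : ρ.w x = ((m:ℕ):WithBot ℕ)) : ρ.nval x = m := by
  have h2 := nwx_nval ρ hx
  rw [h] at h2
  exact (nwx_cast_inj.mp h2.symm)

private lemma nwx_smul (ρ : NearWeight F R) {c : F} (hc : c ≠ 0) (x : R) :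
    ρ.w (c • x) = ρ.w x := ρ.N1 c x hc

private lemma nwx_smul_ne_zero (ρ : NearWeight F R) {c : F} {x : R} (hc : c ≠ 0) (hx : x ≠ 0) :
    c • x ≠ 0 := by
  intro h
  apply nwx_ne_bot ρ hx
  rw [← nwx_smul ρ hc x, h, (ρ.N0 0).2 rfl]

private lemma nwx_neg (ρ : NearWeight F R) (x : R) : ρ.w (-x) = ρ.w x := by
  rw [← neg_one_smul F x]
  exact ρ.N1 (-1) x (by norm_num)

private lemma nwx_add_left (ρ : NearWeight F R) {x y : R} (h : ρ.w y < ρ.w x) :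
    ρ.w (x + y) = ρ.w x := by
  refine le_antisymm ((ρ.N2 x y).trans (max_le le_rfl h.le)) ?_
  have h2 : ρ.w x ≤ max (ρ.w (x+y)) (ρ.w y) := by
    have := ρ.N2 (x+y) (-y)
    rwa [add_neg_cancel_right, nwx_neg] at this
  rcases le_or_gt (ρ.w x) (ρ.w (x+y)) with h3 | h3
  · exact h3
  · exact absurd h2 (not_le.mpr (max_lt h3 h))

private lemma nwx_sub_left (ρ : NearWeight F R) {x y : R} (h : ρ.w y < ρ.w x) :
    ρ.w (x - y) = ρ.w x := by
  rw [sub_eq_add_neg]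
  exact nwx_add_left ρ (by rw [nwx_neg]; exact h)

private lemma nwx_sub_max (ρ : NearWeight F R) {x y : R} (h : ρ.w x ≠ ρ.w y) :
    ρ.w (x - y) = max (ρ.w x) (ρ.w y) := by
  rcases lt_or_gt_of_ne h with h1 | h1
  · rw [show x - y = -(y - x) by ring, nwx_neg, nwx_sub_left ρ h1, max_eq_right h1.le]
  · rw [nwx_sub_left ρ h1, max_eq_left h1.le]

private lemma nwx_sub_ne_zero (ρ : NearWeight F R) {x y : R} (hx : x ≠ 0)
    (h : ρ.w x ≠ ρ.w y) : x - y ≠ 0 := by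
  intro h0
  have hm := nwx_sub_max ρ h
  rw [h0, (ρ.N0 0).2 rfl] at hm
  exact nwx_ne_bot ρ hx (le_bot_iff.mp (hm ▸ le_max_left (ρ.w x) (ρ.w y)))

private lemma nwx_sub_le (ρ : NearWeight F R) (x y : R) :
    ρ.w (x - y) ≤ max (ρ.w x) (ρ.w y) := by
  rw [sub_eq_add_neg]
  have := ρ.N2 x (-y)
  rwa [nwx_neg] at this

private lemma nwx_mul_pos (ρ : NearWeight F R) (h1ρ : ρ.w 1 = 0) {x y : R}
    (hx : 0 < ρ.w x) (hy : 0 < ρ.w y) :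
    ρ.w (x * y) = ρ.w x + ρ.w y ∧ 0 < ρ.w (x * y) := by
  have h := ρ.N5' x y (by rw [h1ρ]; exact hx) (by rw [h1ρ]; exact hy)
  refine ⟨h, ?_⟩
  rw [h]
  exact lt_of_lt_of_le hx (le_add_of_nonneg_right hy.le)

private lemma nwx_dom (ρ σ : NearWeight F R) (h1ρ : ρ.w 1 = 0) (h1σ : σ.w 1 = 0)
    (hU : ρ.U ∩ σ.U = Set.range (algebraMap F R)) :
    ∀ {x y : R}, x ≠ 0 → y ≠ 0 → x * y ≠ 0 := by
  intro x y hx hy h0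
  rcases lt_or_ge 0 (ρ.w x) with hρ | hρ
  · have := ρ.N3 1 x y (by rw [h1ρ]; exact hρ)
    rw [one_mul, h0, (ρ.N0 0).2 rfl, le_bot_iff] at this
    exact nwx_ne_bot ρ hy this
  · rcases lt_or_ge 0 (σ.w x) with hσ | hσ
    · have := σ.N3 1 x y (by rw [h1σ]; exact hσ)
      rw [one_mul, h0, (σ.N0 0).2 rfl, le_bot_iff] at this
      exact nwx_ne_bot σ hy this
    · have hxmem : x ∈ ρ.U ∩ σ.U :=
        ⟨by show ρ.w x ≤ ρ.w 1; rw [h1ρ]; exact hρ,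
         by show σ.w x ≤ σ.w 1; rw [h1σ]; exact hσ⟩
      rw [hU] at hxmem
      obtain ⟨c, hc⟩ := hxmem
      have hc0 : c ≠ 0 := by rintro rfl; rw [map_zero] at hc; exact hx hc.symm
      have hxy : x * y = c • y := by rw [Algebra.smul_def, hc]
      apply hy
      have : y = c⁻¹ • (c • y) := by rw [← mul_smul, inv_mul_cancel₀ hc0, one_smul]
      rw [this, ← hxy, h0, smul_zero]

private lemma nwx_row (ρ σ : NearWeight F R)
    (hfin : ((Hset ρ σ Set.univ)ᶜ : Set (ℕ × ℕ)).Finite) (n₀ : ℕ) :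
    ∃ N : ℕ, ∀ m, N ≤ m →
      ∃ x : R, x ≠ 0 ∧ ρ.w x = ((m:ℕ):WithBot ℕ) ∧ σ.w x = ((n₀:ℕ):WithBot ℕ) := by
  have hinj : Function.Injective (fun m : ℕ => ((m, n₀) : ℕ × ℕ)) := by
    intro a b hab
    simpa using congrArg Prod.fst hab
  have hpre : ((fun m : ℕ => ((m, n₀) : ℕ × ℕ)) ⁻¹' (Hset ρ σ Set.univ)ᶜ).Finite :=
    Set.Finite.preimage (hinj.injOn) hfin
  obtain ⟨N, hN⟩ := hpre.bddAbove
  refine ⟨N + 1, fun m hm => ?_⟩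
  have hmem : (m, n₀) ∈ Hset ρ σ Set.univ := by
    by_contra hc
    have : m ∈ (fun m : ℕ => ((m, n₀) : ℕ × ℕ)) ⁻¹' (Hset ρ σ Set.univ)ᶜ := hc
    have := hN this
    omega
  obtain ⟨x, -, hx0, hpair⟩ := hmem
  have h1 : ρ.nval x = m := (Prod.mk.injEq _ _ _ _ ▸ hpair).1
  have h2 : σ.nval x = n₀ := (Prod.mk.injEq _ _ _ _ ▸ hpair).2
  exact ⟨x, hx0, by rw [nwx_nval ρ hx0, h1], by rw [nwx_nval σ hx0, h2]⟩

private lemma nwx_swap (ρ σ : NearWeight F R)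
    (hfin : ((Hset ρ σ Set.univ)ᶜ : Set (ℕ × ℕ)).Finite) :
    ((Hset σ ρ Set.univ)ᶜ : Set (ℕ × ℕ)).Finite := by
  have he : (Hset σ ρ Set.univ : Set (ℕ × ℕ)) = Prod.swap ⁻¹' (Hset ρ σ Set.univ) := by
    ext p
    constructor
    · rintro ⟨x, -, hx0, rfl⟩
      exact ⟨x, Set.mem_univ x, hx0, rfl⟩
    · rintro ⟨x, -, hx0, hp⟩
      refine ⟨x, Set.mem_univ x, hx0, ?_⟩
      have h1 : ρ.nval x = p.2 := by
        have := congrArg Prod.fst hp; simpa using this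
      have h2 : σ.nval x = p.1 := by
        have := congrArg Prod.snd hp; simpa using this
      rw [h1, h2]
  have : ((Hset σ ρ Set.univ)ᶜ : Set (ℕ × ℕ)) = Prod.swap ⁻¹' (Hset ρ σ Set.univ)ᶜ := by
    rw [he]; rfl
  rw [this]
  exact Set.Finite.preimage (Prod.swap_injective.injOn) hfin

end NWXAux

section NWXAux2

open NearWeight

variable {F R : Type*} [Field F] [CommRing R] [Algebra F R]

private lemma nwx_desc (ρ σ : NearWeight F R) (h1σ : σ.w 1 = 0)
    (x : R) (Q : R → Prop)
    (hQ : ∀ (a b : R) (c : F), c ≠ 0 → Q a → Q b → a - c • b ≠ 0 → Q (a - c • b)) :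
    ∀ s : ℕ, ∀ z : ℕ → R, (∀ i, z i ≠ 0) → (∀ i j, i ≠ j → ρ.w (z i) ≠ ρ.w (z j)) →
      (∀ i, Q (z i)) → (∀ i, σ.w (x * z i) ≤ ((s:ℕ) : WithBot ℕ)) →
      ∃ a b : R, a ≠ 0 ∧ b ≠ 0 ∧ ρ.w a ≠ ρ.w b ∧ Q a ∧ Q b ∧
        σ.w (x * a) ≤ 0 ∧ σ.w (x * b) ≤ 0 := by
  intro s
  induction s with
  | zero =>
    intro z hz0 hzd hQz hσb
    refine ⟨z 0, z 1, hz0 0, hz0 1, hzd 0 1 (by omega), hQz 0, hQz 1, ?_, ?_⟩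
    · have := hσb 0; rwa [nwx_cast_zero] at this
    · have := hσb 1; rwa [nwx_cast_zero] at this
  | succ s ih =>
    intro z hz0 hzd hQz hσb
    by_cases hA : {i : ℕ | σ.w (x * z i) ≤ ((s:ℕ):WithBot ℕ)}.Infinite
    · obtain e := Set.Infinite.natEmbedding _ hA
      refine ih (fun i => z (e i)) (fun i => hz0 _) (fun i j hij => hzd _ _ ?_)
        (fun i => hQz _) (fun i => (e i).2)
      exact fun hc => hij (e.injective (Subtype.ext hc))
    · have hB : ({i : ℕ | σ.w (x * z i) ≤ ((s:ℕ):WithBot ℕ)}ᶜ).Infinite :=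
        Set.Finite.infinite_compl (Set.not_infinite.mp hA)
      obtain e := Set.Infinite.natEmbedding _ hB
      have hval : ∀ k : ℕ, σ.w (x * z (e k)) = ((s+1:ℕ):WithBot ℕ) := by
        intro k
        have h1 : ¬ σ.w (x * z (e k)) ≤ ((s:ℕ):WithBot ℕ) := (e k).2
        have h2 : σ.w (x * z (e k)) ≤ ((s+1:ℕ):WithBot ℕ) := hσb _
        have hbot : σ.w (x * z (e k)) ≠ ⊥ := fun hb => h1 (hb ▸ bot_le)
        obtain ⟨n, hn⟩ := nwx_rep' hbot
        rw [hn] at h1 h2 ⊢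
        have := nwx_cast_le.mp h2
        have h1' : ¬ n ≤ s := fun hle => h1 (nwx_cast_le.mpr hle)
        exact nwx_cast_inj.mpr (by omega)
      have hzdE : ∀ k l : ℕ, k ≠ l → ρ.w (z (e k)) ≠ ρ.w (z (e l)) := fun k l hkl =>
        hzd _ _ (fun hc => hkl (e.injective (Subtype.ext hc)))
      have hN4 : ∀ i : ℕ, ∃ c : F, c ≠ 0 ∧
          σ.w ((x * z (e (2*i))) - c • (x * z (e (2*i+1)))) < σ.w (x * z (e (2*i))) := by
        intro i
        exact σ.N4 _ _
          (by rw [h1σ, hval]; exact nwx_cast_pos.mpr (by omega))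
          (by rw [h1σ, hval]; exact nwx_cast_pos.mpr (by omega))
          (by rw [hval, hval])
      choose c hc0 hcdec using hN4
      set z' : ℕ → R := fun i => z (e (2*i)) - c i • z (e (2*i+1)) with hz'def
      have hz'0 : ∀ i, z' i ≠ 0 := by
        intro i
        exact nwx_sub_ne_zero ρ (hz0 _)
          (by rw [nwx_smul ρ (hc0 i)]; exact hzdE _ _ (by omega))
      have hz'm : ∀ i, ρ.w (z' i) = max (ρ.w (z (e (2*i)))) (ρ.w (z (e (2*i+1)))) := by
        intro i
        have h := nwx_sub_max ρ (x := z (e (2*i))) (y := c i • z (e (2*i+1)))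
          (by rw [nwx_smul ρ (hc0 i)]; exact hzdE _ _ (by omega))
        rw [nwx_smul ρ (hc0 i)] at h
        exact h
      have hz'd : ∀ i j, i ≠ j → ρ.w (z' i) ≠ ρ.w (z' j) := by
        intro i j hij heq
        rw [hz'm i, hz'm j] at heq
        rcases max_cases (ρ.w (z (e (2*i)))) (ρ.w (z (e (2*i+1)))) with ⟨h1, -⟩ | ⟨h1, -⟩ <;>
          rcases max_cases (ρ.w (z (e (2*j)))) (ρ.w (z (e (2*j+1)))) with ⟨h2, -⟩ | ⟨h2, -⟩ <;>
          rw [h1, h2] at heq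
        · exact hzdE _ _ (by omega) heq
        · exact hzdE _ _ (by omega) heq
        · exact hzdE _ _ (by omega) heq
        · exact hzdE _ _ (by omega) heq
      have hQ' : ∀ i, Q (z' i) := fun i => hQ _ _ _ (hc0 i) (hQz _) (hQz _) (hz'0 i)
      have hσ' : ∀ i, σ.w (x * z' i) ≤ ((s:ℕ):WithBot ℕ) := by
        intro i
        have hrw : x * z' i = (x * z (e (2*i))) - c i • (x * z (e (2*i+1))) := by
          rw [hz'def]; dsimp only; rw [mul_sub, mul_smul_comm]
        rw [hrw]
        have h := hcdec i
        rw [hval] at h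
        exact nwx_lt_succ h
      exact ih z' hz'0 hz'd hQ' hσ'

private lemma nwx_step1 (ρ σ : NearWeight F R) (h1ρ : ρ.w 1 = 0) (h1σ : σ.w 1 = 0)
    (hU : ρ.U ∩ σ.U = Set.range (algebraMap F R))
    (hfin : ((Hset ρ σ Set.univ)ᶜ : Set (ℕ × ℕ)).Finite)
    {x : R} (hx : x ≠ 0) :
    ∃ h : R, h ≠ 0 ∧ 0 < ρ.w h ∧ 0 < σ.w h ∧ 0 < ρ.w (x * h) := by
  obtain ⟨N, hN⟩ := nwx_row ρ σ hfin 1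
  obtain ⟨g, hg0, hgρ, hgσ⟩ := hN (N + 1) (by omega)
  have hgρpos : 0 < ρ.w g := by rw [hgρ]; exact nwx_cast_pos.mpr (by omega)
  have hgσpos : 0 < σ.w g := by rw [hgσ]; exact nwx_cast_pos.mpr (by omega)
  rcases lt_or_ge 0 (ρ.w x) with hxρ | hxρ
  · exact ⟨g, hg0, hgρpos, hgσpos, (nwx_mul_pos ρ h1ρ hxρ hgρpos).2⟩
  rcases lt_or_ge 0 (σ.w x) with hxσ | hxσ
  · -- hard case
    by_contra hcon
    push_neg at hcon
    have hcon' : ∀ h : R, h ≠ 0 → 0 < ρ.w h → 0 < σ.w h → ρ.w (x * h) ≤ 0 := hcon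
    set s := σ.nval x with hs
    have hxσval : σ.w x = ((s:ℕ):WithBot ℕ) := nwx_nval σ hx
    set z : ℕ → R := fun i => Classical.choose (hN (N + 1 + i) (by omega)) with hzdef
    have hzspec : ∀ i : ℕ, (z i ≠ 0) ∧ ρ.w (z i) = ((N+1+i : ℕ):WithBot ℕ) ∧
        σ.w (z i) = ((1:ℕ):WithBot ℕ) :=
      fun i => Classical.choose_spec (hN (N+1+i) (by omega))
    have hz0 : ∀ i, z i ≠ 0 := fun i => (hzspec i).1
    have hzd : ∀ i j, i ≠ j → ρ.w (z i) ≠ ρ.w (z j) := by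
      intro i j hij heq
      rw [(hzspec i).2.1, (hzspec j).2.1] at heq
      exact hij (by have := nwx_cast_inj.mp heq; omega)
    have hQz : ∀ i, ρ.w (x * z i) ≤ 0 := by
      intro i
      refine hcon' (z i) (hz0 i) ?_ ?_
      · rw [(hzspec i).2.1]; exact nwx_cast_pos.mpr (by omega)
      · rw [(hzspec i).2.2]; exact nwx_cast_pos.mpr (by omega)
    have hσb : ∀ i, σ.w (x * z i) ≤ ((s+1:ℕ):WithBot ℕ) := by
      intro i
      have hσzi : 0 < σ.w (z i) := by rw [(hzspec i).2.2]; exact nwx_cast_pos.mpr (by omega)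
      have := (nwx_mul_pos σ h1σ hxσ hσzi).1
      rw [this, hxσval, (hzspec i).2.2, ← nwx_cast_add]
    have hQcl : ∀ (a b : R) (c : F), c ≠ 0 → ρ.w (x * a) ≤ 0 → ρ.w (x * b) ≤ 0 →
        a - c • b ≠ 0 → ρ.w (x * (a - c • b)) ≤ 0 := by
      intro a b c hc hQa hQb _
      have hrw : x * (a - c • b) = (x * a) - c • (x * b) := by
        rw [mul_sub, mul_smul_comm]
      rw [hrw]
      exact (nwx_sub_le ρ _ _).trans (max_le hQa (by rw [nwx_smul ρ hc]; exact hQb))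
    obtain ⟨a, b, ha0, hb0, hab, hQa, hQb, hσa, hσb'⟩ :=
      nwx_desc ρ σ h1σ x (fun y => ρ.w (x * y) ≤ 0) hQcl (s+1) z hz0 hzd hQz hσb
    have hxa0 : x * a ≠ 0 := nwx_dom ρ σ h1ρ h1σ hU hx ha0
    have hxb0 : x * b ≠ 0 := nwx_dom ρ σ h1ρ h1σ hU hx hb0
    have hmema : x * a ∈ ρ.U ∩ σ.U :=
      ⟨by show ρ.w (x*a) ≤ ρ.w 1; rw [h1ρ]; exact hQa,
       by show σ.w (x*a) ≤ σ.w 1; rw [h1σ]; exact hσa⟩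
    have hmemb : x * b ∈ ρ.U ∩ σ.U :=
      ⟨by show ρ.w (x*b) ≤ ρ.w 1; rw [h1ρ]; exact hQb,
       by show σ.w (x*b) ≤ σ.w 1; rw [h1σ]; exact hσb'⟩
    rw [hU] at hmema hmemb
    obtain ⟨c₁, hc₁⟩ := hmema
    obtain ⟨c₂, hc₂⟩ := hmemb
    have hc₁0 : c₁ ≠ 0 := by rintro rfl; rw [map_zero] at hc₁; exact hxa0 hc₁.symm
    have hc₂0 : c₂ ≠ 0 := by rintro rfl; rw [map_zero] at hc₂; exact hxb0 hc₂.symm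
    have key : x * (c₂ • a - c₁ • b) = 0 := by
      rw [mul_sub, mul_smul_comm, mul_smul_comm, ← hc₁, ← hc₂,
        Algebra.smul_def, Algebra.smul_def, ← map_mul, ← map_mul, mul_comm c₂ c₁, sub_self]
    have hd0 : c₂ • a - c₁ • b ≠ 0 :=
      nwx_sub_ne_zero ρ (nwx_smul_ne_zero ρ hc₂0 ha0)
        (by rw [nwx_smul ρ hc₂0, nwx_smul ρ hc₁0]; exact hab)
    exact nwx_dom ρ σ h1ρ h1σ hU hx hd0 key
  · -- x is a scalar
    have hxσ0 : σ.w x = 0 := nwx_eq_zero σ h1σ hx hxσ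
    have hxρ0 : ρ.w x = 0 := nwx_eq_zero ρ h1ρ hx hxρ
    have hxmem : x ∈ ρ.U ∩ σ.U :=
      ⟨by show ρ.w x ≤ ρ.w 1; rw [h1ρ, hxρ0], by show σ.w x ≤ σ.w 1; rw [h1σ, hxσ0]⟩
    rw [hU] at hxmem
    obtain ⟨cx, hcx⟩ := hxmem
    have hcx0 : cx ≠ 0 := by rintro rfl; rw [map_zero] at hcx; exact hx hcx.symm
    have hxg : x * g = cx • g := by rw [Algebra.smul_def, hcx]
    exact ⟨g, hg0, hgρpos, hgσpos, by rw [hxg, nwx_smul ρ hcx0]; exact hgρpos⟩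

private lemma nwx_star (ρ σ : NearWeight F R) (h1ρ : ρ.w 1 = 0) (h1σ : σ.w 1 = 0)
    (hU : ρ.U ∩ σ.U = Set.range (algebraMap F R))
    (hfin : ((Hset ρ σ Set.univ)ᶜ : Set (ℕ × ℕ)).Finite)
    (hfin' : ((Hset σ ρ Set.univ)ᶜ : Set (ℕ × ℕ)).Finite)
    {x : R} (hx : x ≠ 0) :
    ∃ h : R, 0 < ρ.w (x * h) ∧ 0 < σ.w (x * h) := by
  have hU' : σ.U ∩ ρ.U = Set.range (algebraMap F R) := by rw [Set.inter_comm]; exact hU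
  obtain ⟨h₁, h₁0, h₁ρ, h₁σ, hxh₁⟩ := nwx_step1 ρ σ h1ρ h1σ hU hfin hx
  obtain ⟨h₂, h₂0, h₂σ, h₂ρ, hxh₂⟩ := nwx_step1 σ ρ h1σ h1ρ hU' hfin' hx
  refine ⟨h₁ * h₂, ?_, ?_⟩
  · have hrw : x * (h₁ * h₂) = (x * h₁) * h₂ := by ring
    rw [hrw]
    exact (nwx_mul_pos ρ h1ρ hxh₁ h₂ρ).2
  · have hrw : x * (h₁ * h₂) = (x * h₂) * h₁ := by ring
    rw [hrw]
    exact (nwx_mul_pos σ h1σ hxh₂ h₁σ).2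

private lemma nwx_rows (ρ σ : NearWeight F R) (h1ρ : ρ.w 1 = 0) (h1σ : σ.w 1 = 0)
    (hU : ρ.U ∩ σ.U = Set.range (algebraMap F R))
    (hfin : ((Hset ρ σ Set.univ)ᶜ : Set (ℕ × ℕ)).Finite)
    {t : R} (ht : t ≠ 0) (hρt : 0 < ρ.w t) :
    ∃ a : R, t * a ≠ 0 ∧ 0 < ρ.w (t * a) ∧ σ.w (t * a) = 0 := by
  obtain ⟨N, hN⟩ := nwx_row ρ σ hfin 0
  set z : ℕ → R := fun i => Classical.choose (hN (N + 1 + i) (by omega)) with hzdef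
  have hzspec : ∀ i : ℕ, (z i ≠ 0) ∧ ρ.w (z i) = ((N+1+i : ℕ):WithBot ℕ) ∧
      σ.w (z i) = ((0:ℕ):WithBot ℕ) :=
    fun i => Classical.choose_spec (hN (N+1+i) (by omega))
  have hz0 : ∀ i, z i ≠ 0 := fun i => (hzspec i).1
  have hzd : ∀ i j, i ≠ j → ρ.w (z i) ≠ ρ.w (z j) := by
    intro i j hij heq
    rw [(hzspec i).2.1, (hzspec j).2.1] at heq
    exact hij (by have := nwx_cast_inj.mp heq; omega)
  set s := σ.nval t with hsdef
  have hts : σ.w t = ((s:ℕ):WithBot ℕ) := nwx_nval σ ht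
  have hσb : ∀ i, σ.w (t * z i) ≤ ((s:ℕ):WithBot ℕ) := by
    intro i
    have h := σ.N5 t (z i)
    rwa [hts, (hzspec i).2.2, nwx_cast_zero, add_zero] at h
  obtain ⟨a, b, ha0, hb0, hab, -, -, hσa, hσb'⟩ :=
    nwx_desc ρ σ h1σ t (fun _ => True) (fun _ _ _ _ _ _ _ => trivial) s z hz0 hzd
      (fun _ => trivial) hσb
  have hdoma : t * a ≠ 0 := nwx_dom ρ σ h1ρ h1σ hU ht ha0
  have hdomb : t * b ≠ 0 := nwx_dom ρ σ h1ρ h1σ hU ht hb0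
  rcases lt_or_ge 0 (ρ.w a) with hpa | hpa
  · exact ⟨a, hdoma, (nwx_mul_pos ρ h1ρ hρt hpa).2, nwx_eq_zero σ h1σ hdoma hσa⟩
  · have hpb : 0 < ρ.w b := by
      rcases lt_or_ge 0 (ρ.w b) with h | h
      · exact h
      · exact absurd (by
          rw [nwx_eq_zero ρ h1ρ ha0 hpa, nwx_eq_zero ρ h1ρ hb0 h] : ρ.w a = ρ.w b) hab
    exact ⟨b, hdomb, (nwx_mul_pos ρ h1ρ hρt hpb).2, nwx_eq_zero σ h1σ hdomb hσb'⟩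

private lemma nwx_exactmul (ρ σ : NearWeight F R) (h1ρ : ρ.w 1 = 0) (h1σ : σ.w 1 = 0)
    (hU : ρ.U ∩ σ.U = Set.range (algebraMap F R))
    {zz h w : R} (hzh : 0 < σ.w (zz * h)) (hh : 0 < σ.w h) (hw : 0 < σ.w w)
    (hcond : σ.w h < σ.w (zz * h) + σ.w w) :
    0 < σ.w (zz * w) ∧ σ.w (zz * w) + σ.w h = σ.w (zz * h) + σ.w w := by
  have hzh0 : zz * h ≠ 0 := nwx_pos_ne_zero σ hzh
  have hz0 : zz ≠ 0 := by rintro rfl; rw [zero_mul] at hzh0; exact hzh0 rfl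
  have hw0 : w ≠ 0 := nwx_pos_ne_zero σ hw
  have hA : σ.w ((zz * h) * w) = σ.w (zz * h) + σ.w w := (nwx_mul_pos σ h1σ hzh hw).1
  have hzw0 : zz * w ≠ 0 := nwx_dom ρ σ h1ρ h1σ hU hz0 hw0
  rcases lt_or_ge 0 (σ.w (zz * w)) with hpos | hle
  · refine ⟨hpos, ?_⟩
    have h2 : σ.w ((zz * w) * h) = σ.w (zz * w) + σ.w h := (nwx_mul_pos σ h1σ hpos hh).1
    rw [show (zz * w) * h = (zz * h) * w by ring] at h2
    exact h2.symm.trans hA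
  · exfalso
    have hz0' : σ.w (zz * w) = 0 := nwx_eq_zero σ h1σ hzw0 hle
    have hle2 : σ.w ((zz * w) * h) ≤ σ.w (zz * w) + σ.w h := σ.N5 _ _
    rw [hz0', zero_add, show (zz * w) * h = (zz * h) * w by ring, hA] at hle2
    exact absurd hcond (not_lt.mpr hle2)

private lemma nwx_rowexact (ρ σ : NearWeight F R) (h1ρ : ρ.w 1 = 0) (h1σ : σ.w 1 = 0)
    (hU : ρ.U ∩ σ.U = Set.range (algebraMap F R))
    (hfin : ((Hset ρ σ Set.univ)ᶜ : Set (ℕ × ℕ)).Finite)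
    (hfin' : ((Hset σ ρ Set.univ)ᶜ : Set (ℕ × ℕ)).Finite)
    {t : R} (ht : t ≠ 0) (hρt : 0 < ρ.w t) (q : ℕ) (hq : 1 ≤ q) :
    ∃ y : R, t * y ≠ 0 ∧ 0 < ρ.w (t * y) ∧ σ.w (t * y) = ((q:ℕ):WithBot ℕ) := by
  obtain ⟨a, hta0, hρta, hσta⟩ := nwx_rows ρ σ h1ρ h1σ hU hfin ht hρt
  obtain ⟨h', hρz0h, hσz0h⟩ := nwx_star ρ σ h1ρ h1σ hU hfin hfin' hta0
  have hz0h0 : (t * a) * h' ≠ 0 := nwx_pos_ne_zero σ hσz0h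
  have hh'0 : h' ≠ 0 := by rintro rfl; rw [mul_zero] at hz0h0; exact hz0h0 rfl
  have hσh'pos : 0 < σ.w h' := by
    rcases lt_or_ge 0 (σ.w h') with hgood | hbad
    · exact hgood
    · exfalso
      have h5 := σ.N5 (t * a) h'
      rw [hσta, zero_add] at h5
      exact absurd hσz0h (not_lt.mpr (h5.trans hbad))
  set b' := σ.nval ((t * a) * h') with hb'def
  set sh := σ.nval h' with hshdef
  have hb' : σ.w ((t * a) * h') = ((b':ℕ):WithBot ℕ) := nwx_nval σ hz0h0
  have hsh : σ.w h' = ((sh:ℕ):WithBot ℕ) := nwx_nval σ hh'0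
  have hb'le : b' ≤ sh := by
    have h5 := σ.N5 (t * a) h'
    rw [hσta, zero_add, hb', hsh] at h5
    exact nwx_cast_le.mp h5
  obtain ⟨N, hN⟩ := nwx_row ρ σ hfin (q + (sh - b'))
  obtain ⟨w, hw0, hwρ, hwσ⟩ := hN (N + 1) (by omega)
  have hwσpos : 0 < σ.w w := by rw [hwσ]; exact nwx_cast_pos.mpr (by omega)
  have hcond : σ.w h' < σ.w ((t * a) * h') + σ.w w := by
    rw [hsh, hb', hwσ, ← nwx_cast_add]
    exact nwx_cast_lt.mpr (by omega)
  obtain ⟨hpos, heq⟩ := nwx_exactmul ρ σ h1ρ h1σ hU hσz0h hσh'pos hwσpos hcond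
  have hz0w0 : (t * a) * w ≠ 0 := nwx_pos_ne_zero σ hpos
  obtain ⟨n, hn⟩ := nwx_rep σ hz0w0
  rw [hn, hsh, hb', hwσ, ← nwx_cast_add, ← nwx_cast_add] at heq
  have hnval : n + sh = b' + (q + (sh - b')) := nwx_cast_inj.mp heq
  have hwρpos : 0 < ρ.w w := by rw [hwρ]; exact nwx_cast_pos.mpr (by omega)
  refine ⟨a * w, ?_, ?_, ?_⟩
  · rw [← mul_assoc]; exact hz0w0
  · rw [← mul_assoc]; exact (nwx_mul_pos ρ h1ρ hρta hwρpos).2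
  · rw [← mul_assoc, hn]
    exact nwx_cast_inj.mpr (by omega)

end NWXAux2

variable {F R : Type*} [Field F] [CommRing R] [Algebra F R]

theorem stmt14
    (hinj : Function.Injective (algebraMap F R))
    (hsur : ¬ Function.Surjective (algebraMap F R))
    (ρ σ : NearWeight F R) (hwa : NearWeight.WellAgreeing ρ σ)
    (f : R) (hf : f ≠ 0) :
    (∀ a ∈ NearWeight.Hset ρ σ ((Ideal.span {f} : Ideal R) : Set R) ∪ {((0 : ℕ), (0 : ℕ))},
      ∀ b ∈ NearWeight.Hset ρ σ ((Ideal.span {f} : Ideal R) : Set R) ∪ {((0 : ℕ), (0 : ℕ))},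
        a + b ∈ NearWeight.Hset ρ σ ((Ideal.span {f} : Ideal R) : Set R) ∪
          {((0 : ℕ), (0 : ℕ))}) ∧
    ((NearWeight.Hset ρ σ ((Ideal.span {f} : Ideal R) : Set R) ∪
      {((0 : ℕ), (0 : ℕ))})ᶜ).Finite := by
  classical
  set HI : Set (ℕ × ℕ) :=
    NearWeight.Hset ρ σ ((Ideal.span {f} : Ideal R) : Set R) ∪ {((0 : ℕ), (0 : ℕ))} with hHIdef
  have h10 : (1 : R) ≠ 0 := by
    intro h
    have : algebraMap F R 1 = algebraMap F R 0 := by rw [map_one, map_zero, h]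
    exact one_ne_zero (hinj this)
  have h1ρ : ρ.w 1 = 0 := ρ.norm0 1 h10 le_rfl
  have h1σ : σ.w 1 = 0 := σ.norm0 1 h10 le_rfl
  obtain ⟨hfin, hU⟩ := hwa
  have hU' : σ.U ∩ ρ.U = Set.range (algebraMap F R) := by rw [Set.inter_comm]; exact hU
  have hfin' := nwx_swap ρ σ hfin
  have hdom : ∀ {x y : R}, x ≠ 0 → y ≠ 0 → x * y ≠ 0 := nwx_dom ρ σ h1ρ h1σ hU
  have hmemHI : ∀ (z : R), z ∈ (Ideal.span {f} : Ideal R) → z ≠ 0 → ∀ m n : ℕ,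
      ρ.w z = ((m:ℕ):WithBot ℕ) → σ.w z = ((n:ℕ):WithBot ℕ) → (m, n) ∈ HI := by
    intro z hz hz0 m n hm hn
    exact Or.inl ⟨z, hz, hz0, by rw [nwx_nval_eq ρ hz0 hm, nwx_nval_eq σ hz0 hn]⟩
  -- CLOSURE
  have closure : ∀ a ∈ HI, ∀ b ∈ HI, a + b ∈ HI := by
    intro a ha b hb
    rcases ha with ha | ha
    swap
    · rw [show a = ((0:ℕ),(0:ℕ)) from ha, show (((0:ℕ),(0:ℕ)) : ℕ × ℕ) = 0 from rfl, zero_add]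
      exact hb
    rcases hb with hb | hb
    swap
    · rw [show b = ((0:ℕ),(0:ℕ)) from hb, show (((0:ℕ),(0:ℕ)) : ℕ × ℕ) = 0 from rfl, add_zero]
      exact Or.inl ha
    obtain ⟨p, hpI, hp0, hpair⟩ := ha
    obtain ⟨q, hqI, hq0, hqair⟩ := hb
    subst hpair
    subst hqair
    have hpρ : ρ.w p = ((ρ.nval p : ℕ):WithBot ℕ) := nwx_nval ρ hp0
    have hpσ : σ.w p = ((σ.nval p : ℕ):WithBot ℕ) := nwx_nval σ hp0
    have hqρ : ρ.w q = ((ρ.nval q : ℕ):WithBot ℕ) := nwx_nval ρ hq0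
    have hqσ : σ.w q = ((σ.nval q : ℕ):WithBot ℕ) := nwx_nval σ hq0
    set m1 := ρ.nval p with hm1
    set n1 := σ.nval p with hn1
    set m2 := ρ.nval q with hm2
    set n2 := σ.nval q with hn2
    have hpI' : p ∈ (Ideal.span {f} : Ideal R) := hpI
    have hqI' : q ∈ (Ideal.span {f} : Ideal R) := hqI
    have get1 : ∃ h₁ : R, h₁ ∈ (Ideal.span {f} : Ideal R) ∧ h₁ ≠ 0 ∧
        ρ.w h₁ = ((m1+m2:ℕ):WithBot ℕ) ∧ σ.w h₁ ≤ ((n1+n2:ℕ):WithBot ℕ) := by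
      rcases Nat.eq_zero_or_pos m1 with hz | hpos1
      · exact ⟨q, hqI', hq0, by rw [show m1 + m2 = m2 by omega]; exact hqρ,
          by rw [hqσ]; exact nwx_cast_le.mpr (by omega)⟩
      rcases Nat.eq_zero_or_pos m2 with hz | hpos2
      · exact ⟨p, hpI', hp0, by rw [show m1 + m2 = m1 by omega]; exact hpρ,
          by rw [hpσ]; exact nwx_cast_le.mpr (by omega)⟩
      refine ⟨p * q, Ideal.mul_mem_right q _ hpI', hdom hp0 hq0, ?_, ?_⟩
      · rw [(nwx_mul_pos ρ h1ρ (by rw [hpρ]; exact nwx_cast_pos.mpr hpos1)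
          (by rw [hqρ]; exact nwx_cast_pos.mpr hpos2)).1, hpρ, hqρ, ← nwx_cast_add]
      · have h5 := σ.N5 p q
        rw [hpσ, hqσ, ← nwx_cast_add] at h5
        exact h5
    have get2 : ∃ h₂ : R, h₂ ∈ (Ideal.span {f} : Ideal R) ∧ h₂ ≠ 0 ∧
        σ.w h₂ = ((n1+n2:ℕ):WithBot ℕ) ∧ ρ.w h₂ ≤ ((m1+m2:ℕ):WithBot ℕ) := by
      rcases Nat.eq_zero_or_pos n1 with hz | hpos1
      · exact ⟨q, hqI', hq0, by rw [show n1 + n2 = n2 by omega]; exact hqσ,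
          by rw [hqρ]; exact nwx_cast_le.mpr (by omega)⟩
      rcases Nat.eq_zero_or_pos n2 with hz | hpos2
      · exact ⟨p, hpI', hp0, by rw [show n1 + n2 = n1 by omega]; exact hpσ,
          by rw [hpρ]; exact nwx_cast_le.mpr (by omega)⟩
      refine ⟨p * q, Ideal.mul_mem_right q _ hpI', hdom hp0 hq0, ?_, ?_⟩
      · rw [(nwx_mul_pos σ h1σ (by rw [hpσ]; exact nwx_cast_pos.mpr hpos1)
          (by rw [hqσ]; exact nwx_cast_pos.mpr hpos2)).1, hpσ, hqσ, ← nwx_cast_add]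
      · have h5 := ρ.N5 p q
        rw [hpρ, hqρ, ← nwx_cast_add] at h5
        exact h5
    obtain ⟨h₁, h1I, h1ne, h1ρv, h1σv⟩ := get1
    obtain ⟨h₂, h2I, h2ne, h2σv, h2ρv⟩ := get2
    rw [Prod.mk_add_mk]
    rcases h2ρv.lt_or_eq with hLt | hEq
    swap
    · exact hmemHI h₂ h2I h2ne _ _ hEq h2σv
    rcases h1σv.lt_or_eq with hLt2 | hEq2
    swap
    · exact hmemHI h₁ h1I h1ne _ _ h1ρv hEq2
    have hρz : ρ.w (h₁ + h₂) = ((m1+m2:ℕ):WithBot ℕ) := by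
      rw [nwx_add_left ρ (by rw [h1ρv]; exact hLt)]
      exact h1ρv
    have hσz : σ.w (h₁ + h₂) = ((n1+n2:ℕ):WithBot ℕ) := by
      rw [add_comm h₁ h₂, nwx_add_left σ (by rw [h2σv]; exact hLt2)]
      exact h2σv
    have hz0 : h₁ + h₂ ≠ 0 := by
      intro h0
      apply nwx_cast_ne_bot (m1+m2)
      rw [← hρz, h0, (ρ.N0 0).2 rfl]
    exact hmemHI _ (Ideal.add_mem _ h1I h2I) hz0 _ _ hρz hσz
  refine ⟨closure, ?_⟩
  -- FINITENESS
  obtain ⟨h, hth1, hth2⟩ := nwx_star ρ σ h1ρ h1σ hU hfin hfin' hf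
  have ht0 : f * h ≠ 0 := nwx_pos_ne_zero ρ hth1
  have htI : f * h ∈ Ideal.span {f} :=
    Ideal.mul_mem_right h _ (Ideal.mem_span_singleton_self f)
  set t := f * h with htdef
  set aa := ρ.nval t with haadef
  set bb := σ.nval t with hbbdef
  have htρ : ρ.w t = ((aa:ℕ):WithBot ℕ) := nwx_nval ρ ht0
  have htσ : σ.w t = ((bb:ℕ):WithBot ℕ) := nwx_nval σ ht0
  have haa : 1 ≤ aa := by
    rw [htρ] at hth1; have := nwx_cast_pos.mp hth1; omega
  have hbb : 1 ≤ bb := by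
    rw [htσ] at hth2; have := nwx_cast_pos.mp hth2; omega
  -- bulk
  have bulk : ∀ m n : ℕ, 1 ≤ m → 1 ≤ n → (m, n) ∈ NearWeight.Hset ρ σ Set.univ →
      (aa + m, bb + n) ∈ HI := by
    intro m n hm hn hmem
    obtain ⟨u, -, hu0, hupair⟩ := hmem
    have h1 : ρ.nval u = m := (Prod.mk.injEq _ _ _ _ ▸ hupair).1
    have h2 : σ.nval u = n := (Prod.mk.injEq _ _ _ _ ▸ hupair).2
    have huρ : ρ.w u = ((m:ℕ):WithBot ℕ) := by rw [nwx_nval ρ hu0, h1]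
    have huσ : σ.w u = ((n:ℕ):WithBot ℕ) := by rw [nwx_nval σ hu0, h2]
    have huρpos : 0 < ρ.w u := by rw [huρ]; exact nwx_cast_pos.mpr (by omega)
    have huσpos : 0 < σ.w u := by rw [huσ]; exact nwx_cast_pos.mpr (by omega)
    refine hmemHI (t * u) (Ideal.mul_mem_right u _ htI) (hdom ht0 hu0) _ _ ?_ ?_
    · rw [(nwx_mul_pos ρ h1ρ hth1 huρpos).1, htρ, huρ, ← nwx_cast_add]
    · rw [(nwx_mul_pos σ h1σ hth2 huσpos).1, htσ, huσ, ← nwx_cast_add]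
  -- row 0 element and row 0 cofinite
  obtain ⟨a₀, hta₀, hρta₀, hσta₀⟩ := nwx_rows ρ σ h1ρ h1σ hU hfin ht0 hth1
  have hz₀I : t * a₀ ∈ Ideal.span {f} := Ideal.mul_mem_right a₀ _ htI
  set cc := ρ.nval (t * a₀) with hccdef
  have hz₀ρ : ρ.w (t * a₀) = ((cc:ℕ):WithBot ℕ) := nwx_nval ρ hta₀
  have hcc : 1 ≤ cc := by
    rw [hz₀ρ] at hρta₀; have := nwx_cast_pos.mp hρta₀; omega
  obtain ⟨N₀, hN₀⟩ := nwx_row ρ σ hfin 0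
  have row0 : ∀ p : ℕ, cc + N₀ + 1 ≤ p → (p, 0) ∈ HI := by
    intro p hp
    obtain ⟨u, hu0, huρ, huσ⟩ := hN₀ (p - cc) (by omega)
    have huρpos : 0 < ρ.w u := by rw [huρ]; exact nwx_cast_pos.mpr (by omega)
    have hne : (t * a₀) * u ≠ 0 := hdom hta₀ hu0
    refine hmemHI ((t * a₀) * u) (Ideal.mul_mem_right u _ hz₀I) hne p 0 ?_ ?_
    · rw [(nwx_mul_pos ρ h1ρ hρta₀ huρpos).1, hz₀ρ, huρ, ← nwx_cast_add]
      exact nwx_cast_inj.mpr (by omega)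
    · have hσle : σ.w ((t * a₀) * u) ≤ 0 := by
        have h5 := σ.N5 (t * a₀) u
        rwa [hσta₀, huσ, nwx_cast_zero, add_zero] at h5
      rw [nwx_cast_zero]
      exact nwx_eq_zero σ h1σ hne hσle
  -- col 0 element and col 0 cofinite
  obtain ⟨a₁, hta₁, hσta₁, hρta₁⟩ := nwx_rows σ ρ h1σ h1ρ hU' hfin' ht0 hth2
  have hz₁I : t * a₁ ∈ Ideal.span {f} := Ideal.mul_mem_right a₁ _ htI
  set dd := σ.nval (t * a₁) with hdddef
  have hz₁σ : σ.w (t * a₁) = ((dd:ℕ):WithBot ℕ) := nwx_nval σ hta₁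
  have hdd : 1 ≤ dd := by
    rw [hz₁σ] at hσta₁; have := nwx_cast_pos.mp hσta₁; omega
  obtain ⟨N₁, hN₁⟩ := nwx_row σ ρ hfin' 0
  have col0 : ∀ q : ℕ, dd + N₁ + 1 ≤ q → (0, q) ∈ HI := by
    intro q hq
    obtain ⟨u, hu0, huσ, huρ⟩ := hN₁ (q - dd) (by omega)
    have huσpos : 0 < σ.w u := by rw [huσ]; exact nwx_cast_pos.mpr (by omega)
    have hne : (t * a₁) * u ≠ 0 := hdom hta₁ hu0
    refine hmemHI ((t * a₁) * u) (Ideal.mul_mem_right u _ hz₁I) hne 0 q ?_ ?_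
    · have hρle : ρ.w ((t * a₁) * u) ≤ 0 := by
        have h5 := ρ.N5 (t * a₁) u
        rwa [hρta₁, huρ, nwx_cast_zero, add_zero] at h5
      rw [nwx_cast_zero]
      exact nwx_eq_zero ρ h1ρ hne hρle
    · rw [(nwx_mul_pos σ h1σ hσta₁ huσpos).1, hz₁σ, huσ, ← nwx_cast_add]
      exact nwx_cast_inj.mpr (by omega)
  -- one exact point on each row q ≥ 1 and column p ≥ 1
  have rowq : ∀ q : ℕ, 1 ≤ q → ∃ cq : ℕ, (cq, q) ∈ HI := by
    intro q hq
    obtain ⟨y, hty0, hρty, hσty⟩ :=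
      nwx_rowexact ρ σ h1ρ h1σ hU hfin hfin' ht0 hth1 q hq
    exact ⟨ρ.nval (t * y), hmemHI _ (Ideal.mul_mem_right y _ htI) hty0 _ _
      (nwx_nval ρ hty0) hσty⟩
  have colp : ∀ p : ℕ, 1 ≤ p → ∃ dp : ℕ, (p, dp) ∈ HI := by
    intro p hp
    obtain ⟨y, hty0, hσty, hρty⟩ :=
      nwx_rowexact σ ρ h1σ h1ρ hU' hfin' hfin ht0 hth2 p hp
    exact ⟨σ.nval (t * y), hmemHI _ (Ideal.mul_mem_right y _ htI) hty0 _ _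
      hρty (nwx_nval σ hty0)⟩
  -- rows are cofinite
  have rowfin : ∀ q : ℕ, ({p : ℕ | (p, q) ∉ HI}).Finite := by
    intro q
    rcases Nat.eq_zero_or_pos q with rfl | hq
    · refine Set.Finite.subset (Set.finite_Iio (cc + N₀ + 1)) ?_
      intro p hp
      simp only [Set.mem_setOf_eq] at hp
      simp only [Set.mem_Iio]
      by_contra hge
      exact hp (row0 p (by omega))
    · obtain ⟨cq, hcq⟩ := rowq q hq
      refine Set.Finite.subset (Set.finite_Iio (cq + (cc + N₀ + 1))) ?_
      intro p hp
      simp only [Set.mem_setOf_eq] at hp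
      simp only [Set.mem_Iio]
      by_contra hge
      push_neg at hge
      have h0 : (p - cq, 0) ∈ HI := row0 _ (by omega)
      have hsum := closure _ hcq _ h0
      rw [Prod.mk_add_mk, show cq + (p - cq) = p by omega, add_zero] at hsum
      exact hp hsum
  -- columns are cofinite
  have colfin : ∀ p : ℕ, ({q : ℕ | (p, q) ∉ HI}).Finite := by
    intro p
    rcases Nat.eq_zero_or_pos p with rfl | hp
    · refine Set.Finite.subset (Set.finite_Iio (dd + N₁ + 1)) ?_
      intro q hqmem
      simp only [Set.mem_setOf_eq] at hqmem
      simp only [Set.mem_Iio]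
      by_contra hge
      exact hqmem (col0 q (by omega))
    · obtain ⟨dp, hdp⟩ := colp p hp
      refine Set.Finite.subset (Set.finite_Iio (dp + (dd + N₁ + 1))) ?_
      intro q hqmem
      simp only [Set.mem_setOf_eq] at hqmem
      simp only [Set.mem_Iio]
      by_contra hge
      push_neg at hge
      have h0 : (0, q - dp) ∈ HI := col0 _ (by omega)
      have hsum := closure _ hdp _ h0
      rw [Prod.mk_add_mk, show dp + (q - dp) = q by omega, add_zero] at hsum
      exact hqmem hsum
  -- cover
  have cover : HIᶜ ⊆
      (((fun mn : ℕ × ℕ => (mn.1 + aa, mn.2 + bb)) '' (NearWeight.Hset ρ σ Set.univ)ᶜ)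
        ∪ (⋃ q ∈ Finset.range (bb + 1), (fun p : ℕ => (p, q)) '' {p : ℕ | (p, q) ∉ HI}))
      ∪ (⋃ p ∈ Finset.range (aa + 1), (fun q : ℕ => (p, q)) '' {q : ℕ | (p, q) ∉ HI}) := by
    rintro ⟨p, q⟩ hpq
    simp only [Set.mem_compl_iff] at hpq
    by_cases hq : q ≤ bb
    · refine Or.inl (Or.inr ?_)
      exact Set.mem_biUnion (Finset.mem_range.mpr (by omega)) ⟨p, hpq, rfl⟩
    by_cases hp : p ≤ aa
    · refine Or.inr ?_
      exact Set.mem_biUnion (Finset.mem_range.mpr (by omega)) ⟨q, hpq, rfl⟩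
    refine Or.inl (Or.inl ?_)
    refine ⟨(p - aa, q - bb), ?_, ?_⟩
    · intro hmem
      apply hpq
      have := bulk (p - aa) (q - bb) (by omega) (by omega) hmem
      rwa [show aa + (p - aa) = p by omega, show bb + (q - bb) = q by omega] at this
    · simp only [Prod.mk.injEq]
      omega
  refine Set.Finite.subset ?_ cover
  refine Set.Finite.union (Set.Finite.union ?_ ?_) ?_
  · exact hfin.image _
  · exact Set.Finite.biUnion (Finset.range (bb + 1)).finite_toSet
      (fun q _ => (rowfin q).image _)
  · exact Set.Finite.biUnion (Finset.range (aa + 1)).finite_toSet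
      (fun p _ => (colfin p).image _)
end
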